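/- arXiv:1511.04302 — 5 statements merged into one kernel-verified Lean document; each statement's English description precedes it below -/
import Mathlib

section
/- For every i ≥ 0, the power series π_i satisfies π_i ∈ p^i π + π² ℤ_p[[π]]; that is, π_i − p^i π, viewed as a power series in π, has all coefficients of degree ≤ 1 equal to 0 except that the identity holds modulo π² ℤ_p[[π]]. -/
open PowerSeries
open scoped Classical

noncomputable section

/-- The power series `Σ_{i≥0} X^(p^i − 1)`, the logarithmic derivative of the
Artin–Hasse exponential. -/
def ahLogDeriv (p : ℕ) (R : Type*) [CommRing R] : PowerSeries R :=
  PowerSeries.mk fun n => if ∃ i : ℕ, n + 1 = p ^ i then 1 else 0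

/-- `E` is the Artin–Hasse exponential `exp(Σ_{i≥0} X^(p^i)/p^i)`: over a characteristic-zero
ring with no additive torsion this is equivalent to `E(0) = 1` together with the logarithmic
differential equation `E' = E · Σ_{i≥0} X^(p^i−1)`. -/
def IsArtinHasse (p : ℕ) {R : Type*} [CommRing R] (E : PowerSeries R) : Prop :=
  PowerSeries.constantCoeff E = 1 ∧
    (PowerSeries.derivative R) E = E * ahLogDeriv p R

/-- Composition `f(g)` of formal power series (intended for `g` with zero constant term,
in which case this is the usual substitution). -/
def psComp {R : Type*} [CommRing R] (f g : PowerSeries R) : PowerSeries R :=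
  PowerSeries.mk fun n => ∑ k ∈ Finset.range (n + 1),
    PowerSeries.coeff k f * PowerSeries.coeff n (g ^ k)

/-- `w = π_i`: the unique power series with zero constant term satisfying
`E(π_i) = (1+T)^(p^i)`. -/
def IsPiAH (p : ℕ) {R : Type*} [CommRing R] (E : PowerSeries R) (i : ℕ)
    (w : PowerSeries R) : Prop :=
  PowerSeries.constantCoeff w = 0 ∧ psComp E w = (1 + PowerSeries.X) ^ p ^ i

/-- `bin z n` is the binomial coefficient `C(z, n)`, characterized by
`n! · bin z n = z(z−1)⋯(z−n+1)`. -/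
def IsBinomial {R : Type*} [CommRing R] (bin : R → ℕ → R) : Prop :=
  ∀ z n, (n.factorial : R) * bin z n = ∏ i ∈ Finset.range n, (z - (i : R))

/-- The binomial series `(1+T)^z = Σ_n C(z,n) Tⁿ`. -/
def onePlusTPow {R : Type*} [CommRing R] (bin : R → ℕ → R) (z : R) : PowerSeries R :=
  PowerSeries.mk fun n => bin z n

/-- `F^z = Σ_n C(z,n) (F−1)ⁿ` for a power series `F` with constant term `1`. -/
def psPow {R : Type*} [CommRing R] (bin : R → ℕ → R) (z : R) (F : PowerSeries R) :
    PowerSeries R :=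
  PowerSeries.mk fun n => ∑ k ∈ Finset.range (n + 1),
    bin z k * PowerSeries.coeff n ((F - 1) ^ k)

/-- The canonical ring map `ℤ_p = W(𝔽_p) → W(F)` for a ring `F` of characteristic `p`. -/
def toWitt (p : ℕ) [Fact p.Prime] (F : Type*) [CommRing F] [CharP F p] :
    ℤ_[p] →+* WittVector p F :=
  (WittVector.map (ZMod.castHom dvd_rfl F)).comp (WittVector.equiv p).symm.toRingHom

/-- `E(cst · η · x^u)` as a power series in `x` whose coefficients are power series
(in the variable of `η`). -/
def EmonoSub {R : Type*} [CommRing R] (E : PowerSeries R) (eta : PowerSeries R) (cst : R)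
    (u : ℕ) : PowerSeries (PowerSeries R) :=
  if u = 0 then PowerSeries.C (psComp E (PowerSeries.C cst * eta))
  else PowerSeries.mk fun v =>
    if u ∣ v then PowerSeries.C (PowerSeries.coeff (v / u) E * cst ^ (v / u)) * eta ^ (v / u)
    else 0

/-- `E_h(x, η) = ∏_{u=0}^{d'} E(η ĥ_u x^u)` for `h` with (lifted) coefficients `co u`. -/
def Eh {R : Type*} [CommRing R] (E : PowerSeries R) (eta : PowerSeries R) (co : ℕ → R)
    (d' : ℕ) : PowerSeries (PowerSeries R) :=
  ∏ u ∈ Finset.range (d' + 1), EmonoSub E eta (co u) u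

/-- The partial product `∏_{i<n} E_{f_i}(x, π_i)`. -/
def EfPartial {R : Type*} [CommRing R] (E : PowerSeries R) (Pi : ℕ → PowerSeries R)
    (co : ℕ → ℕ → R) (d : ℕ → ℕ) (n : ℕ) : PowerSeries (PowerSeries R) :=
  ∏ i ∈ Finset.range n, Eh E (Pi i) (co i) (d i)

/-- `Ef = E_f(x) = ∏_{i=0}^∞ E_{f_i}(x, π_i)`, as the `(p,T)`-adic limit of the partial
products: the `x^u`-coefficient of `E_f − ∏_{i<n} E_{f_i}` lies in `(p, T)^(n+1)`. -/
def IsEfProd (p : ℕ) {R : Type*} [CommRing R] (E : PowerSeries R) (Pi : ℕ → PowerSeries R)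
    (co : ℕ → ℕ → R) (d : ℕ → ℕ) (Ef : PowerSeries (PowerSeries R)) : Prop :=
  ∀ n u : ℕ,
    PowerSeries.coeff u Ef - PowerSeries.coeff u (EfPartial E Pi co d n)
      ∈ (Ideal.span {(p : PowerSeries R), PowerSeries.X}) ^ (n + 1)

/-- `ord_R(g) ≥ r`:  for `mt = 1` the `T`-adic order of `g` is at least `r`; for `mt ≥ 2`,
writing `g = Σ_j c_j T^j`, `min_j (ord_p(c_j)·p^(mt−2)(p−1) + j) ≥ r`
(the `(p^θ, T)`-adic order with `θ = 1/(p^(mt−2)(p−1))`, normalized by `ord_R(T) = 1`). -/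
def ordRge (p : ℕ) {R : Type*} [CommRing R] (mt : ℕ) (g : PowerSeries R) (r : ℚ) : Prop :=
  ∀ j n : ℕ, ¬ ((p : R) ^ (n + 1) ∣ PowerSeries.coeff j g) →
    (if mt = 1 then r ≤ (j : ℚ)
     else r ≤ (n : ℚ) * ((p : ℚ) ^ (mt - 2) * ((p : ℚ) - 1)) + (j : ℚ))


section PiAux
variable {R : Type*} [CommRing R]

lemma coeff_one_onePlusX_pow (n : ℕ) :
    coeff 1 ((1 + X : PowerSeries R) ^ n) = n := by
  induction n with
  | zero => simp
  | succ n ih =>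
    rw [pow_succ, coeff_mul, Finset.Nat.antidiagonal_succ]
    simp [ih, Prod.map]
    ring

lemma coeff_one_psComp (f w : PowerSeries R) :
    coeff 1 (psComp f w) = coeff 1 f * coeff 1 w := by
  rw [psComp, coeff_mk]
  rw [Finset.sum_range_succ, Finset.sum_range_one]
  simp

lemma coeff_one_AH (p : ℕ) (E : PowerSeries R) (hE : IsArtinHasse p E) :
    coeff 1 E = 1 := by
  have h0 := congrArg (coeff 0) hE.2
  rw [coeff_derivative, coeff_mul] at h0
  simp only [Finset.Nat.antidiagonal_zero] at h0
  rw [Finset.sum_singleton] at h0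
  have : coeff 0 (ahLogDeriv p R) = 1 := by
    rw [ahLogDeriv, coeff_mk, if_pos ⟨0, by simp⟩]
  simpa [coeff_zero_eq_constantCoeff, hE.1, this] using h0

lemma coeff_one_pi (p : ℕ) (E : PowerSeries R) (hE : IsArtinHasse p E)
    (i : ℕ) (w : PowerSeries R) (hw : IsPiAH p E i w) :
    coeff 1 w = (p : R) ^ i := by
  have := congrArg (coeff 1) hw.2
  rw [coeff_one_psComp, coeff_one_AH p E hE, one_mul, coeff_one_onePlusX_pow] at this
  simpa using this

end PiAux

/-- For every `i ≥ 0`, `π_i ∈ p^i·π + π²·ℤ_p[[π]]`. -/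
theorem pi_i_eq_pPow_mul_pi_mod_sq (p : ℕ) [Fact p.Prime]
    (E : PowerSeries ℤ_[p]) (hE : IsArtinHasse p E)
    (pi0 : PowerSeries ℤ_[p]) (hpi0 : IsPiAH p E 0 pi0)
    (i : ℕ) (pii : PowerSeries ℤ_[p]) (hpii : IsPiAH p E i pii) :
    ∃ g : PowerSeries ℤ_[p],
      pii = (p : PowerSeries ℤ_[p]) ^ i * pi0 + pi0 ^ 2 * g := by
  -- pi0 = X * u with u a unit
  obtain ⟨u, hu⟩ := X_dvd_iff.mpr hpi0.1
  have hcu : constantCoeff u = 1 := by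
    have h1 : coeff 1 pi0 = 1 := by
      simpa using coeff_one_pi p E hE 0 pi0 hpi0
    have := congrArg (coeff 1) hu
    rwa [h1, coeff_succ_X_mul 0, coeff_zero_eq_constantCoeff, eq_comm] at this
  set v := u.invOfUnit 1 with hv
  have huv : u * v = 1 := mul_invOfUnit u 1 (by simpa using hcu)
  -- h := pii - p^i * pi0 has X^2 ∣ h
  set h := pii - (p : PowerSeries ℤ_[p]) ^ i * pi0 with hh
  have hX2 : (X : PowerSeries ℤ_[p]) ^ 2 ∣ h := by
    rw [X_pow_dvd_iff]
    intro m hm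
    interval_cases m
    · simp [hh, hpii.1, hpi0.1]
    · have h1 : coeff 1 pi0 = 1 := by
        simpa using coeff_one_pi p E hE 0 pi0 hpi0
      have h2 : coeff 1 pii = (p : ℤ_[p]) ^ i := coeff_one_pi p E hE i pii hpii
      rw [hh, map_sub, h2]
      have : ((p : PowerSeries ℤ_[p]) ^ i) = PowerSeries.C ((p:ℤ_[p])^i) := by
        simp [map_pow]
      rw [this, coeff_C_mul, h1, mul_one, sub_self]
  obtain ⟨h', hh'⟩ := hX2
  refine ⟨h' * v ^ 2, ?_⟩
  have : pi0 ^ 2 * (h' * v ^ 2) = h := by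
    have e : (X * u) ^ 2 * (h' * v ^ 2) = X ^ 2 * h' * (u * v) ^ 2 := by ring
    rw [hu, hh', e, huv, one_pow, mul_one]
  rw [this, hh]; ring


end
end

section
/- Fix i ≥ 0 and expand π_i as a power series in T, π_i = Σ_{j≥1} c_j T^j with c_j ∈ ℤ_p. If j satisfies p^{i'} ≤ j < p^{i'+1} ≤ p^i for some integer i' ≥ 0, then ord_p(c_j) ≥ i − i'. -/
open PowerSeries
open scoped Classical

noncomputable section

section Statement4Aux

variable {p : ℕ} [hp : Fact p.Prime]

private lemma aux_coeff_one_add_X_pow (R : Type*) [CommRing R] (N n : ℕ) :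
    PowerSeries.coeff n ((1 + PowerSeries.X) ^ N) = (N.choose n : R) := by
  have h : ((1 + Polynomial.X : Polynomial R) : PowerSeries R) = 1 + PowerSeries.X := by simp
  rw [← h, ← Polynomial.coe_pow, Polynomial.coeff_coe, Polynomial.coeff_one_add_X_pow]

private lemma aux_pow_dvd_pow_of_le {b j : ℕ} (i : ℕ) (h : b ≤ j) :
    (p : ℤ_[p]) ^ (i - Nat.log p j) ∣ (p : ℤ_[p]) ^ (i - Nat.log p b) :=
  pow_dvd_pow _ (Nat.sub_le_sub_left (Nat.log_mono_right h) i)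

private lemma aux_coeff_pow_dvd (i : ℕ) (pii : PowerSeries ℤ_[p]) :
    ∀ (k j b : ℕ), b < j →
      (∀ m, m < j → (p : ℤ_[p]) ^ (i - Nat.log p m) ∣ PowerSeries.coeff m pii) →
      (p : ℤ_[p]) ^ (i - Nat.log p b) ∣ PowerSeries.coeff b (pii ^ (k + 1)) := by
  intro k
  induction k with
  | zero => intro j b hb hD; simpa using hD b hb
  | succ k ih =>
    intro j b hb hD
    rw [pow_succ, PowerSeries.coeff_mul]
    refine Finset.dvd_sum ?_
    rintro ⟨x, y⟩ hxy
    rw [Finset.HasAntidiagonal.mem_antidiagonal] at hxy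
    have hx : x ≤ b := Nat.le.intro hxy
    exact Dvd.dvd.mul_right
      (dvd_trans (aux_pow_dvd_pow_of_le i hx) (ih j x (lt_of_le_of_lt hx hb) hD)) _

private lemma aux_coeff_pow2_dvd (i : ℕ) (pii : PowerSeries ℤ_[p])
    (hc0 : PowerSeries.constantCoeff pii = 0) (k j : ℕ)
    (hD : ∀ m, m < j → (p : ℤ_[p]) ^ (i - Nat.log p m) ∣ PowerSeries.coeff m pii) :
    (p : ℤ_[p]) ^ (i - Nat.log p j) ∣ PowerSeries.coeff j (pii ^ (k + 2)) := by
  rw [pow_succ, PowerSeries.coeff_mul]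
  refine Finset.dvd_sum ?_
  rintro ⟨x, y⟩ hxy
  rw [Finset.HasAntidiagonal.mem_antidiagonal] at hxy
  rcases Nat.eq_zero_or_pos y with hy | hy
  · subst hy
    simp [PowerSeries.coeff_zero_eq_constantCoeff, hc0]
  · have hx : x < j := by omega
    exact Dvd.dvd.mul_right
      (dvd_trans (aux_pow_dvd_pow_of_le i (Nat.le.intro hxy))
        (aux_coeff_pow_dvd i pii k j x hx hD)) _

private lemma aux_main (E : PowerSeries ℤ_[p]) (hE : IsArtinHasse p E) (i : ℕ)
    (pii : PowerSeries ℤ_[p]) (hpii : IsPiAH p E i pii) :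
    ∀ j, (p : ℤ_[p]) ^ (i - Nat.log p j) ∣ PowerSeries.coeff j pii := by
  have hc0 : PowerSeries.constantCoeff pii = 0 := hpii.1
  have ha1 : PowerSeries.coeff 1 E = 1 := by
    have h2 := hE.2
    have h := congrArg (PowerSeries.coeff 0) h2
    rw [PowerSeries.coeff_derivative, PowerSeries.coeff_mul] at h
    simp only [Finset.Nat.antidiagonal_zero, Finset.sum_singleton, ahLogDeriv,
      PowerSeries.coeff_mk, PowerSeries.coeff_zero_eq_constantCoeff, hE.1,
      one_mul, Nat.cast_zero, zero_add, mul_one] at h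
    rw [if_pos ⟨0, (pow_zero p).symm⟩] at h
    exact h
  intro j
  induction j using Nat.strong_induction_on with
  | _ j ih =>
  cases j with
  | zero =>
    rw [PowerSeries.coeff_zero_eq_constantCoeff, hc0]
    exact dvd_zero _
  | succ m =>
    by_cases hv : i ≤ Nat.log p (m + 1)
    · rw [Nat.sub_eq_zero_of_le hv, pow_zero]
      exact one_dvd _
    push_neg at hv
    have hji : m + 1 < p ^ i :=
      lt_of_lt_of_le (Nat.lt_pow_succ_log_self hp.out.one_lt _)
        (Nat.pow_le_pow_right hp.out.pos hv)
    have heq := congrArg (PowerSeries.coeff (m + 1)) hpii.2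
    rw [psComp, PowerSeries.coeff_mk, aux_coeff_one_add_X_pow] at heq
    rw [Finset.sum_range_succ', Finset.sum_range_succ'] at heq
    simp only [pow_one, pow_zero, PowerSeries.coeff_one, Nat.succ_ne_zero, if_false,
      mul_zero, add_zero, zero_add, ha1, one_mul] at heq
    have hc : PowerSeries.coeff (m + 1) pii =
        ((p ^ i).choose (m + 1) : ℤ_[p]) -
          ∑ k ∈ Finset.range m,
            PowerSeries.coeff (k + 1 + 1) E *
              PowerSeries.coeff (m + 1) (pii ^ (k + 1 + 1)) :=
      eq_sub_of_add_eq' heq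
    rw [hc]
    refine dvd_sub ?_ (Finset.dvd_sum fun k _ => ?_)
    · have hkey : p ^ (i - multiplicity p (m + 1)) ∣ (p ^ i).choose (m + 1) :=
        WittVector.map_frobeniusPoly.key₁ p i m (Nat.lt_of_succ_lt hji)
      have hmle : multiplicity p (m + 1) ≤ Nat.log p (m + 1) := by
        have h1 : p ^ multiplicity p (m + 1) ∣ m + 1 := pow_multiplicity_dvd p (m + 1)
        exact (Nat.le_log_iff_pow_le hp.out.one_lt (Nat.succ_ne_zero m)).2
          (Nat.le_of_dvd (Nat.succ_pos m) h1)
      have hdvd : p ^ (i - Nat.log p (m + 1)) ∣ (p ^ i).choose (m + 1) :=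
        dvd_trans (pow_dvd_pow p (Nat.sub_le_sub_left hmle i)) hkey
      have := Nat.cast_dvd_cast (α := ℤ_[p]) hdvd
      push_cast at this
      exact this
    · exact Dvd.dvd.mul_left
        (aux_coeff_pow2_dvd i pii hc0 k (m + 1) fun m' hm' => ih m' hm') _

end Statement4Aux

/-- If `π_i = Σ_{j≥1} c_j T^j` and `p^{i'} ≤ j < p^{i'+1} ≤ p^i`,
then `ord_p(c_j) ≥ i − i'`. -/
theorem pi_i_coeff_padic_valuation (p : ℕ) [Fact p.Prime]
    (E : PowerSeries ℤ_[p]) (hE : IsArtinHasse p E)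
    (i : ℕ) (pii : PowerSeries ℤ_[p]) (hpii : IsPiAH p E i pii)
    (j i' : ℕ) (h1 : p ^ i' ≤ j) (h2 : j < p ^ (i' + 1)) (h3 : p ^ (i' + 1) ≤ p ^ i) :
    (p : ℤ_[p]) ^ (i - i') ∣ PowerSeries.coeff j pii := by
  have hlog : Nat.log p j = i' := Nat.log_eq_of_pow_le_of_lt_pow h1 h2
  have h := aux_main E hE i pii hpii j
  rwa [hlog] at h

end
end

section
/- Write E_{f_i}(x, π_i) = Σ_{u≥0} α_u^{(i)} x^u, E_f(x) = ∏_{i=0}^∞ E_{f_i}(x, π_i) = Σ_{u≥0} α_u x^u, and ∏_{j=0}^{ak−1} E_f^{σ^j}(x^{p^j}) = Σ_{u≥0} β_{u,k} x^u, with all coefficients in ℤ_q[[π]]. Then ord_π(α_u^{(i)}) ≥ u/D, ord_π(α_u) ≥ u/D, and ord_π(β_{u,k}) ≥ u/(p^{ak−1} D) for all u ≥ 0. -/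
open PowerSeries
open scoped Classical

noncomputable section

/-- Substitution `x ↦ x^e` in a power series. -/
def psStretch {A : Type*} [CommRing A] (G : PowerSeries A) (e : ℕ) : PowerSeries A :=
  PowerSeries.mk fun v => if e ∣ v then PowerSeries.coeff (v / e) G else 0

/-- `E_f^{σ^j}(x^(p^j))`: apply the Witt Frobenius `σ^j` to all coefficients and substitute
`x ↦ x^(p^j)`. -/
def EfTwisted (p : ℕ) [Fact p.Prime] {F : Type*} [CommRing F]
    (Ef : PowerSeries (PowerSeries (WittVector p F))) (j : ℕ) :
    PowerSeries (PowerSeries (WittVector p F)) :=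
  psStretch
    (PowerSeries.map (PowerSeries.map
      ((WittVector.frobenius : WittVector p F →+* WittVector p F) ^ j)) Ef) (p ^ j)

/-- `∏_{j<ak} E_f^{σ^j}(x^(p^j)) = Σ_u β_{u,k} x^u`. -/
def betaProd (p : ℕ) [Fact p.Prime] {F : Type*} [CommRing F]
    (Ef : PowerSeries (PowerSeries (WittVector p F))) (ak : ℕ) :
    PowerSeries (PowerSeries (WittVector p F)) :=
  ∏ j ∈ Finset.range ak, EfTwisted p Ef j


section OrderHelpers

variable {R : Type*} [CommRing R]

/-- The coefficient-level condition `ord(coeff u φ) ≥ u / M`. -/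
def GoodPS (M : ℕ) (φ : PowerSeries (PowerSeries R)) : Prop :=
  ∀ u j : ℕ, M * j < u →
    PowerSeries.coeff j (PowerSeries.coeff u φ) = 0

lemma goodPS_one (M : ℕ) : GoodPS (R := R) M 1 := by
  intro u j h
  have hu : u ≠ 0 := by omega
  rw [PowerSeries.coeff_one, if_neg hu, map_zero]

lemma goodPS_mul {M : ℕ} {φ ψ : PowerSeries (PowerSeries R)}
    (hφ : GoodPS M φ) (hψ : GoodPS M ψ) : GoodPS M (φ * ψ) := by
  intro u j h
  rw [PowerSeries.coeff_mul, map_sum]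
  apply Finset.sum_eq_zero
  rintro ⟨x, y⟩ hxy
  rw [Finset.HasAntidiagonal.mem_antidiagonal] at hxy
  rw [PowerSeries.coeff_mul]
  apply Finset.sum_eq_zero
  rintro ⟨j1, j2⟩ hj
  rw [Finset.HasAntidiagonal.mem_antidiagonal] at hj
  by_cases h1 : M * j1 < x
  · rw [hφ x j1 h1, zero_mul]
  · have h2 : M * j2 < y := by
      by_contra h2
      push_neg at h1 h2
      have : u ≤ M * j := by
        calc u = x + y := hxy.symm
          _ ≤ M * j1 + M * j2 := Nat.add_le_add h1 h2
          _ = M * (j1 + j2) := (Nat.mul_add M j1 j2).symm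
          _ = M * j := by rw [hj]
      exact absurd h (not_lt.2 this)
    rw [hψ y j2 h2, mul_zero]

lemma goodPS_prod {M : ℕ} {ι : Type*} (s : Finset ι)
    (f : ι → PowerSeries (PowerSeries R)) (h : ∀ x ∈ s, GoodPS M (f x)) :
    GoodPS M (∏ x ∈ s, f x) :=
  Finset.prod_induction f (GoodPS M) (fun _ _ => goodPS_mul) (goodPS_one M) h

lemma coeff_pow_eq_zero_of_constantCoeff {eta : PowerSeries R}
    (h : PowerSeries.constantCoeff eta = 0) {j m : ℕ} (hjm : j < m) :
    PowerSeries.coeff j (eta ^ m) = 0 := by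
  have hd : (PowerSeries.X : PowerSeries R) ^ m ∣ eta ^ m :=
    pow_dvd_pow_of_dvd (PowerSeries.X_dvd_iff.2 h) m
  exact (PowerSeries.X_pow_dvd_iff.1 hd) j hjm

lemma goodPS_EmonoSub (E eta : PowerSeries R) (cst : R) {u' D : ℕ}
    (heta : PowerSeries.constantCoeff eta = 0) (hu' : u' ≤ D) :
    GoodPS D (EmonoSub E eta cst u') := by
  intro u j h
  by_cases h0 : u' = 0
  · rw [EmonoSub, if_pos h0, PowerSeries.coeff_C, if_neg (by omega), map_zero]
  · rw [EmonoSub, if_neg h0, PowerSeries.coeff_mk]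
    by_cases hdvd : u' ∣ u
    · rw [if_pos hdvd, PowerSeries.coeff_C_mul]
      have h1 : 1 ≤ u' := Nat.one_le_iff_ne_zero.2 h0
      have hm : j < u / u' := by
        have e : u' * (u / u') = u := Nat.mul_div_cancel' hdvd
        have hle : u ≤ D * (u / u') := by
          calc u = u' * (u / u') := e.symm
            _ ≤ D * (u / u') := Nat.mul_le_mul_right _ hu'
        exact lt_of_mul_lt_mul_left (lt_of_lt_of_le h hle) (Nat.zero_le D)
      rw [coeff_pow_eq_zero_of_constantCoeff heta hm, mul_zero]
    · rw [if_neg hdvd, map_zero]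

lemma goodPS_Eh (E eta : PowerSeries R) (co : ℕ → R) {d' D : ℕ}
    (heta : PowerSeries.constantCoeff eta = 0) (hd : d' ≤ D) :
    GoodPS D (Eh E eta co d') :=
  goodPS_prod _ _ fun u' hu' =>
    goodPS_EmonoSub _ _ _ heta
      (le_trans (Nat.lt_succ_iff.1 (Finset.mem_range.1 hu')) hd)

lemma good_to_order {M : ℕ} (hM : M ≠ 0) {g : PowerSeries R} {u : ℕ}
    (h : ∀ j, M * j < u → PowerSeries.coeff j g = 0) :
    (u : ℕ∞) ≤ (M : ℕ∞) * PowerSeries.order g := by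
  by_cases hg : g = 0
  · rw [hg, PowerSeries.order_zero, ENat.mul_top (by exact_mod_cast hM)]
    exact le_top
  · have hlt : g.order < ⊤ := PowerSeries.order_finite_iff_ne_zero.2 hg
    have hcoeff : PowerSeries.coeff (g.order.lift hlt) g ≠ 0 := by
      rw [ENat.lift_eq_toNat_of_lt_top hlt]; exact PowerSeries.coeff_order hg
    have hnlt : ¬ M * g.order.lift hlt < u := fun hc => hcoeff (h _ hc)
    have hle : u ≤ M * g.order.lift hlt := not_lt.1 hnlt
    have he : g.order = ((g.order.lift hlt : ℕ) : ℕ∞) := (ENat.coe_lift _ hlt).symm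
    rw [he, ← Nat.cast_mul]
    exact_mod_cast hle

lemma dvd_coeff_of_mem_span_pow (P : R) (n : ℕ) :
    ∀ g ∈ (Ideal.span {PowerSeries.C P, PowerSeries.X}) ^ n,
      ∀ j : ℕ, P ^ (n - j) ∣ PowerSeries.coeff j g := by
  induction n with
  | zero => intro g _ j; simpa using one_dvd _
  | succ n ih =>
    intro g hg
    rw [pow_succ] at hg
    refine Submodule.mul_induction_on hg ?_ ?_
    · intro x hx y hy j
      obtain ⟨α, β, hab⟩ := Ideal.mem_span_pair.1 hy
      have e : x * y = PowerSeries.C P * (x * α) + PowerSeries.X * (x * β) := by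
        rw [← hab]; ring
      rw [e, map_add, PowerSeries.coeff_C_mul]
      apply dvd_add
      · have h1 : P ^ (n - j + 1) ∣ P * PowerSeries.coeff j (x * α) := by
          rw [pow_succ']
          exact mul_dvd_mul_left P (ih _ (Ideal.mul_mem_right α _ hx) j)
        exact dvd_trans (pow_dvd_pow P (show n + 1 - j ≤ n - j + 1 by omega)) h1
      · cases j with
        | zero =>
          have : PowerSeries.coeff 0 (PowerSeries.X * (x * β)) = 0 := by
            simp [PowerSeries.coeff_zero_eq_constantCoeff, map_mul]
          rw [this]
          exact dvd_zero _
        | succ i =>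
          rw [PowerSeries.coeff_succ_X_mul]
          exact dvd_trans (pow_dvd_pow P (show n + 1 - (i + 1) ≤ n - i by omega))
            (ih _ (Ideal.mul_mem_right β _ hx) i)
    · intro x y hx hy j
      rw [map_add]
      exact dvd_add (hx j) (hy j)

end OrderHelpers

lemma witt_eq_zero_of_forall_pow_dvd {p : ℕ} [Fact p.Prime] {Fq : Type} [Field Fq]
    [Fintype Fq] [CharP Fq p] (x : WittVector p Fq)
    (h : ∀ m : ℕ, (p : WittVector p Fq) ^ m ∣ x) : x = 0 := by
  by_contra hx
  obtain ⟨m, b, hb0, rfl⟩ := WittVector.exists_eq_pow_p_mul x hx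
  obtain ⟨y, hy⟩ := h (m + 1)
  have hp : (p : WittVector p Fq) ≠ 0 := WittVector.p_nonzero p Fq
  have hb : b = p * y := by
    apply mul_left_cancel₀ (pow_ne_zero m hp)
    rw [hy, pow_succ, mul_assoc]
  apply hb0
  rw [hb, mul_comm]
  exact WittVector.mul_charP_coeff_zero y

/-- With `E_{f_i}(x,π_i) = Σ_u α_u^{(i)} x^u`, `E_f(x) = Σ_u α_u x^u` and
`∏_{j<ak} E_f^{σ^j}(x^(p^j)) = Σ_u β_{u,k} x^u`, one has `ord_π(α_u^{(i)}) ≥ u/D`,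
`ord_π(α_u) ≥ u/D` and `ord_π(β_{u,k}) ≥ u/(p^(ak−1) D)` (stated as
`D·ord ≥ u`, resp. `p^(ak−1)·D·ord ≥ u`). -/
theorem Ef_coefficients_order_bounds (p a k : ℕ) [Fact p.Prime] (ha : 1 ≤ a) (hk : 1 ≤ k)
    (Fq : Type) [Field Fq] [Fintype Fq] [CharP Fq p] (hq : Fintype.card Fq = p ^ a)
    (E : PowerSeries ℤ_[p]) (hE : IsArtinHasse p E)
    (Pi : ℕ → PowerSeries ℤ_[p]) (hPi : ∀ i, IsPiAH p E i (Pi i))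
    (d : ℕ → ℕ) (c : ℕ → ℕ → Fq) (hd0 : 0 < d 0)
    (hlead : ∀ i, 0 < d i → c i (d i) ≠ 0) (hctop : ∀ i u, d i < u → c i u = 0)
    (D : ℕ) (hD : IsGreatest (Set.range d) D)
    (Ef : PowerSeries (PowerSeries (WittVector p Fq)))
    (hEf : IsEfProd p (PowerSeries.map (toWitt p Fq) E)
      (fun i => PowerSeries.map (toWitt p Fq) (Pi i))
      (fun i u => WittVector.teichmuller p (c i u)) d Ef) :
    (∀ i u : ℕ, (u : ℕ∞) ≤ (D : ℕ∞) *
        PowerSeries.order (PowerSeries.coeff u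
          (Eh (PowerSeries.map (toWitt p Fq) E) (PowerSeries.map (toWitt p Fq) (Pi i))
            (fun u => WittVector.teichmuller p (c i u)) (d i)))) ∧
      (∀ u : ℕ, (u : ℕ∞) ≤ (D : ℕ∞) *
        PowerSeries.order (PowerSeries.coeff u Ef)) ∧
      (∀ u : ℕ, (u : ℕ∞) ≤ ((p ^ (a * k - 1) * D : ℕ) : ℕ∞) *
        PowerSeries.order (PowerSeries.coeff u (betaProd p Ef (a * k)))) := by
  classical
  have hpp : p.Prime := Fact.out
  have hD1 : d 0 ≤ D := hD.2 ⟨0, rfl⟩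
  have hD0 : D ≠ 0 := by omega
  -- constant coefficients of the mapped Pi's vanish
  have heta : ∀ i, PowerSeries.constantCoeff
      (PowerSeries.map (toWitt p Fq) (Pi i)) = 0 := by
    intro i
    rw [← PowerSeries.coeff_zero_eq_constantCoeff_apply, PowerSeries.coeff_map,
      PowerSeries.coeff_zero_eq_constantCoeff_apply, (hPi i).1, map_zero]
  have hEhgood : ∀ i : ℕ, GoodPS D
      (Eh (PowerSeries.map (toWitt p Fq) E) (PowerSeries.map (toWitt p Fq) (Pi i))
        (fun u => WittVector.teichmuller p (c i u)) (d i)) := fun i =>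
    goodPS_Eh _ _ _ (heta i) (hD.2 ⟨i, rfl⟩)
  have hPartgood : ∀ n : ℕ, GoodPS D
      (EfPartial (PowerSeries.map (toWitt p Fq) E)
        (fun i => PowerSeries.map (toWitt p Fq) (Pi i))
        (fun i u => WittVector.teichmuller p (c i u)) d n) := fun n =>
    goodPS_prod _ _ fun i _ => hEhgood i
  have hEfgood : GoodPS D Ef := by
    intro u j h
    apply witt_eq_zero_of_forall_pow_dvd
    intro m
    have herr := hEf (j + m) u
    rw [show ((p : ℕ) : PowerSeries (WittVector p Fq)) = PowerSeries.C ((p : ℕ) : WittVector p Fq) from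
      (map_natCast (PowerSeries.C (R := WittVector p Fq)) p).symm] at herr
    have hdvd := dvd_coeff_of_mem_span_pow ((p : ℕ) : WittVector p Fq) (j + m + 1) _ herr j
    have hz := hPartgood (j + m) u j h
    rw [map_sub, hz, sub_zero] at hdvd
    exact dvd_trans (pow_dvd_pow _ (by omega)) hdvd
  have hak : 1 ≤ a * k := Nat.one_le_iff_ne_zero.2 (by positivity)
  have hM0 : p ^ (a * k - 1) * D ≠ 0 := by
    have := hpp.pos
    positivity
  have hTwgood : ∀ j < a * k, GoodPS (p ^ (a * k - 1) * D) (EfTwisted p Ef j) := by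
    intro j hj v i h
    rw [EfTwisted, psStretch, PowerSeries.coeff_mk]
    by_cases hdvd : p ^ j ∣ v
    · rw [if_pos hdvd, PowerSeries.coeff_map, PowerSeries.coeff_map]
      have hm : D * i < v / p ^ j := by
        have e : p ^ j * (v / p ^ j) = v := Nat.mul_div_cancel' hdvd
        have hle : p ^ j ≤ p ^ (a * k - 1) := Nat.pow_le_pow_right hpp.pos (by omega)
        have : p ^ j * (D * i) < p ^ j * (v / p ^ j) := by
          calc p ^ j * (D * i) ≤ p ^ (a * k - 1) * (D * i) :=
                Nat.mul_le_mul_right _ hle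
            _ = p ^ (a * k - 1) * D * i := by ring
            _ < v := h
            _ = p ^ j * (v / p ^ j) := e.symm
        exact lt_of_mul_lt_mul_left this (Nat.zero_le _)
      rw [hEfgood _ _ hm, map_zero]
    · rw [if_neg hdvd, map_zero]
  have hbetagood : GoodPS (p ^ (a * k - 1) * D) (betaProd p Ef (a * k)) :=
    goodPS_prod _ _ fun j hj => hTwgood j (Finset.mem_range.1 hj)
  refine ⟨?_, ?_, ?_⟩
  · intro i u
    exact good_to_order hD0 fun j hj => hEhgood i u j hj
  · intro u
    exact good_to_order hD0 fun j hj => hEfgood u j hj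
  · intro u
    exact good_to_order hM0 fun j hj => hbetagood u j hj


end
end

section
/- Let m̃ = 1 + (the first index i with d_i = D). If m̃ = 1 let ord_R = ord_π; if m̃ ≥ 2 let θ = 1/(p^{m̃−2}(p−1)) and define ord_R(Σ_j c_j π^j) = min_j ( ord_p(c_j)·p^{m̃−2}(p−1) + j ) on ℤ_q[[π]] (the (p^θ, π)-adic order, normalized so ord_R(π) = 1 and ord_R(p) = p^{m̃−2}(p−1)). Then ord_R(π_i) ≥ p^i for all 0 ≤ i ≤ m̃ − 1, and ord_R(π_i) ≥ p^{m̃−1} for all i ≥ m̃ − 1. -/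
open PowerSeries
open scoped Classical

noncomputable section

namespace AuxPS

variable {R : Type*} [CommRing R]

lemma coeff_psComp (f g : PowerSeries R) (n : ℕ) :
    coeff n (psComp f g) = ∑ k ∈ Finset.range (n + 1), coeff k f * coeff n (g ^ k) := by
  simp [psComp]

lemma coeff_pow_eq_zero {g : PowerSeries R} (hg : constantCoeff g = 0) {k n : ℕ}
    (h : n < k) : coeff n (g ^ k) = 0 := by
  have : (X : PowerSeries R) ^ k ∣ g ^ k := pow_dvd_pow_of_dvd (X_dvd_iff.mpr hg) k
  exact (X_pow_dvd_iff.mp this) n h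

lemma coeff_psComp' (f : PowerSeries R) {g : PowerSeries R} (hg : constantCoeff g = 0)
    {n M : ℕ} (h : n < M) :
    coeff n (psComp f g) = ∑ k ∈ Finset.range M, coeff k f * coeff n (g ^ k) := by
  rw [coeff_psComp]
  apply Finset.sum_subset (Finset.range_subset_range.mpr h)
  intro k _ hk
  rw [Finset.mem_range, not_lt] at hk
  rw [coeff_pow_eq_zero hg (by omega), mul_zero]

lemma constantCoeff_psComp (f g : PowerSeries R) :
    constantCoeff (psComp f g) = constantCoeff f := by
  have := coeff_psComp f g 0
  simp only [coeff_zero_eq_constantCoeff] at *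
  simpa using this

lemma psComp_add (f₁ f₂ g : PowerSeries R) :
    psComp (f₁ + f₂) g = psComp f₁ g + psComp f₂ g := by
  ext n
  simp [coeff_psComp, add_mul, Finset.sum_add_distrib]

lemma psComp_sub (f₁ f₂ g : PowerSeries R) :
    psComp (f₁ - f₂) g = psComp f₁ g - psComp f₂ g := by
  ext n
  simp [coeff_psComp, sub_mul, Finset.sum_sub_distrib]

lemma psComp_C (c : R) (g : PowerSeries R) : psComp (C c) g = C c := by
  ext n
  rw [coeff_psComp, Finset.sum_eq_single 0]
  · simp [coeff_C, coeff_one]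
  · intro k _ hk
    simp [coeff_C, hk]
  · simp

lemma psComp_one (g : PowerSeries R) : psComp 1 g = 1 := by
  simpa using psComp_C 1 g

lemma psComp_X {g : PowerSeries R} (hg : constantCoeff g = 0) : psComp X g = g := by
  ext n
  rw [coeff_psComp]
  rcases Nat.eq_zero_or_pos n with rfl | hn
  · simpa [coeff_X] using hg.symm
  · rw [Finset.sum_eq_single 1]
    · simp [coeff_X]
    · intro k _ hk
      simp [coeff_X, hk]
    · intro h
      exact absurd (Finset.mem_range.mpr (by omega)) h

lemma psComp_id (f : PowerSeries R) : psComp f X = f := by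
  ext n
  rw [coeff_psComp, Finset.sum_eq_single n]
  · simp [coeff_X_pow]
  · intro k _ hk
    simp [coeff_X_pow, Ne.symm hk]
  · intro h
    exact absurd (Finset.mem_range.mpr (by omega)) h

lemma triangle_sum {M : Type*} [AddCommMonoid M] (n : ℕ) (F : ℕ → ℕ → M)
    (hF : ∀ a b, n < a + b → F a b = 0) :
    ∑ m ∈ Finset.range (n + 1), ∑ q ∈ Finset.HasAntidiagonal.antidiagonal m, F q.1 q.2
      = ∑ k ∈ Finset.range (n + 1), ∑ l ∈ Finset.range (n + 1), F k l := by
  have h1 : ∑ k ∈ Finset.range (n + 1), ∑ l ∈ Finset.range (n + 1), F k l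
      = ∑ q ∈ (Finset.range (n + 1) ×ˢ Finset.range (n + 1)), F q.1 q.2 := by
    rw [Finset.sum_product]
  have h2 : ∑ q ∈ (Finset.range (n + 1) ×ˢ Finset.range (n + 1)), F q.1 q.2
      = ∑ q ∈ (Finset.range (n + 1) ×ˢ Finset.range (n + 1)).filter
          (fun q => q.1 + q.2 ≤ n), F q.1 q.2 := by
    symm
    apply Finset.sum_filter_of_ne
    intro q _ hq
    by_contra hle
    exact hq (hF q.1 q.2 (by omega))
  rw [h1, h2, Finset.sum_sigma']
  apply Finset.sum_nbij' (fun x => x.2) (fun q => ⟨q.1 + q.2, q⟩)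
  · rintro ⟨m, a, b⟩ hx
    simp only [Finset.mem_sigma, Finset.mem_range, Finset.HasAntidiagonal.mem_antidiagonal] at hx
    simp only [Finset.mem_filter, Finset.mem_product, Finset.mem_range]
    omega
  · rintro ⟨a, b⟩ hq
    simp only [Finset.mem_filter, Finset.mem_product, Finset.mem_range] at hq
    exact Finset.mem_sigma.mpr ⟨Finset.mem_range.mpr (by show a + b < n + 1; omega),
      Finset.HasAntidiagonal.mem_antidiagonal.mpr rfl⟩
  · rintro ⟨m, a, b⟩ hx
    simp only [Finset.mem_sigma, Finset.mem_range, Finset.HasAntidiagonal.mem_antidiagonal] at hx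
    simp [hx.2]
  · rintro ⟨a, b⟩ _
    rfl
  · rintro ⟨m, a, b⟩ _
    rfl

lemma psComp_mul (f₁ f₂ : PowerSeries R) {g : PowerSeries R} (hg : constantCoeff g = 0) :
    psComp (f₁ * f₂) g = psComp f₁ g * psComp f₂ g := by
  ext n
  -- RHS
  have hS : ∀ u : ℕ, u ≤ n → ∀ f : PowerSeries R, coeff u (psComp f g)
      = coeff u (∑ k ∈ Finset.range (n + 1), C (coeff k f) * g ^ k) := by
    intro u hu f
    rw [coeff_psComp' f hg (by omega : u < n + 1)]
    simp [coeff_C_mul]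
  have hRHS : coeff n (psComp f₁ g * psComp f₂ g)
      = coeff n ((∑ k ∈ Finset.range (n + 1), C (coeff k f₁) * g ^ k)
          * (∑ k ∈ Finset.range (n + 1), C (coeff k f₂) * g ^ k)) := by
    rw [coeff_mul, coeff_mul]
    apply Finset.sum_congr rfl
    rintro ⟨u, v⟩ huv
    rw [Finset.HasAntidiagonal.mem_antidiagonal] at huv
    rw [hS u (by omega) f₁, hS v (by omega) f₂]
  have hprod : (∑ k ∈ Finset.range (n + 1), C (coeff k f₁) * g ^ k)
          * (∑ k ∈ Finset.range (n + 1), C (coeff k f₂) * g ^ k)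
      = ∑ k ∈ Finset.range (n + 1), ∑ l ∈ Finset.range (n + 1),
          C (coeff k f₁ * coeff l f₂) * g ^ (k + l) := by
    rw [Finset.sum_mul_sum]
    apply Finset.sum_congr rfl; intro k _
    apply Finset.sum_congr rfl; intro l _
    rw [map_mul, pow_add]; ring
  rw [hRHS, hprod]
  -- LHS
  rw [coeff_psComp]
  simp only [coeff_mul]
  have := triangle_sum n (fun a b => coeff a f₁ * coeff b f₂ * coeff n (g ^ (a + b)))
    (fun a b hab => by
      show coeff a f₁ * coeff b f₂ * coeff n (g ^ (a + b)) = 0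
      rw [coeff_pow_eq_zero hg hab, mul_zero])
  calc ∑ m ∈ Finset.range (n + 1),
        (∑ q ∈ Finset.HasAntidiagonal.antidiagonal m, coeff q.1 f₁ * coeff q.2 f₂) * coeff n (g ^ m)
      = ∑ m ∈ Finset.range (n + 1), ∑ q ∈ Finset.HasAntidiagonal.antidiagonal m,
          coeff q.1 f₁ * coeff q.2 f₂ * coeff n (g ^ (q.1 + q.2)) := by
        apply Finset.sum_congr rfl; intro m hm
        rw [Finset.sum_mul]
        apply Finset.sum_congr rfl; intro q hq
        rw [Finset.HasAntidiagonal.mem_antidiagonal] at hq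
        rw [hq]
    _ = ∑ k ∈ Finset.range (n + 1), ∑ l ∈ Finset.range (n + 1),
          coeff k f₁ * coeff l f₂ * coeff n (g ^ (k + l)) := this
    _ = coeff n (∑ k ∈ Finset.range (n + 1), ∑ l ∈ Finset.range (n + 1),
          C (coeff k f₁ * coeff l f₂) * g ^ (k + l)) := by
        rw [map_sum]
        apply Finset.sum_congr rfl; intro k _
        rw [map_sum]
        apply Finset.sum_congr rfl; intro l _
        rw [coeff_C_mul]

lemma psComp_pow (f : PowerSeries R) {g : PowerSeries R} (hg : constantCoeff g = 0)
    (k : ℕ) : psComp (f ^ k) g = (psComp f g) ^ k := by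
  induction k with
  | zero => simpa using psComp_one g
  | succ k ih => rw [pow_succ, pow_succ, psComp_mul _ _ hg, ih]

lemma psComp_assoc (f g h : PowerSeries R) (hg : constantCoeff g = 0)
    (hh : constantCoeff h = 0) :
    psComp (psComp f g) h = psComp f (psComp g h) := by
  ext n
  rw [coeff_psComp]
  calc ∑ k ∈ Finset.range (n + 1), coeff k (psComp f g) * coeff n (h ^ k)
      = ∑ k ∈ Finset.range (n + 1), ∑ l ∈ Finset.range (n + 1),
          coeff l f * coeff k (g ^ l) * coeff n (h ^ k) := by
        apply Finset.sum_congr rfl; intro k hk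
        rw [Finset.mem_range] at hk
        rw [coeff_psComp' f hg hk, Finset.sum_mul]
    _ = ∑ l ∈ Finset.range (n + 1),
          coeff l f * ∑ k ∈ Finset.range (n + 1), coeff k (g ^ l) * coeff n (h ^ k) := by
        rw [Finset.sum_comm]
        apply Finset.sum_congr rfl; intro l _
        rw [Finset.mul_sum]
        apply Finset.sum_congr rfl; intro k _
        ring
    _ = ∑ l ∈ Finset.range (n + 1), coeff l f * coeff n ((psComp g h) ^ l) := by
        apply Finset.sum_congr rfl; intro l _
        rw [← coeff_psComp (g ^ l) h n, psComp_pow _ hh]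
    _ = coeff n (psComp f (psComp g h)) := (coeff_psComp _ _ _).symm

/-- Coefficients of the compositional inverse of `W` (for `W` with `W(0)=0`, `W'(0)=1`). -/
def icoef (W : PowerSeries R) : ℕ → R
  | n => (if n = 1 then 1 else 0) -
      ∑ k ∈ (Finset.range n).attach, icoef W k * coeff n (W ^ (k : ℕ))
  termination_by n => n
  decreasing_by exact Finset.mem_range.mp k.2

lemma icoef_eq (W : PowerSeries R) (n : ℕ) : icoef W n = (if n = 1 then 1 else 0) -
    ∑ k ∈ Finset.range n, icoef W k * coeff n (W ^ k) := by
  rw [icoef]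
  congr 1
  exact Finset.sum_attach (Finset.range n) (fun k => icoef W k * coeff n (W ^ k))

/-- Compositional inverse. -/
def compInv (W : PowerSeries R) : PowerSeries R := PowerSeries.mk (icoef W)

lemma constantCoeff_compInv (W : PowerSeries R) : constantCoeff (compInv W) = 0 := by
  have : coeff 0 (compInv W) = 0 := by
    rw [compInv, coeff_mk, icoef_eq]
    simp
  simpa using this

lemma coeff_one_compInv (W : PowerSeries R) : coeff 1 (compInv W) = 1 := by
  rw [compInv, coeff_mk, icoef_eq]
  simp [coeff_one]

lemma coeff_pow_self {W : PowerSeries R} (hW0 : constantCoeff W = 0) (n : ℕ) :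
    coeff n (W ^ n) = (coeff 1 W) ^ n := by
  obtain ⟨u, rfl⟩ := X_dvd_iff.mpr hW0
  have h1 : coeff n ((X : PowerSeries R) ^ n * u ^ n) = coeff 0 (u ^ n) := by
    simpa using coeff_X_pow_mul (u ^ n) n 0
  have h2 : coeff 1 ((X : PowerSeries R) * u) = coeff 0 u := by
    simpa using coeff_succ_X_mul 0 u
  rw [mul_pow, h1, h2]
  simp [coeff_zero_eq_constantCoeff, map_pow]

lemma psComp_compInv_left {W : PowerSeries R} (hW0 : constantCoeff W = 0)
    (hW1 : coeff 1 W = 1) : psComp (compInv W) W = X := by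
  ext n
  simp only [coeff_psComp, compInv, coeff_mk]
  rw [Finset.sum_range_succ, icoef_eq, coeff_pow_self hW0, hW1, one_pow, coeff_X]
  ring

lemma psComp_compInv_right {W : PowerSeries R} (hW0 : constantCoeff W = 0)
    (hW1 : coeff 1 W = 1) : psComp W (compInv W) = X := by
  set V := compInv W with hV
  have hV0 : constantCoeff V = 0 := constantCoeff_compInv W
  have hV1 : coeff 1 V = 1 := coeff_one_compInv W
  set U := compInv V with hU
  have hUV : psComp U V = X := psComp_compInv_left hV0 hV1
  have h1 : psComp (psComp U V) W = psComp U (psComp V W) := psComp_assoc U V W hV0 hW0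
  rw [hUV, psComp_X hW0, psComp_compInv_left hW0 hW1, psComp_id] at h1
  rw [h1]
  exact hUV

lemma map_psComp {S : Type*} [CommRing S] (φ : R →+* S) (f g : PowerSeries R) :
    PowerSeries.map φ (psComp f g) = psComp (PowerSeries.map φ f) (PowerSeries.map φ g) := by
  ext n
  rw [PowerSeries.coeff_map, coeff_psComp, coeff_psComp, map_sum]
  apply Finset.sum_congr rfl
  intro k _
  rw [map_mul, PowerSeries.coeff_map, ← map_pow, PowerSeries.coeff_map]

lemma psComp_X_pow_p (p : ℕ) [hp : Fact p.Prime] (f : PowerSeries (ZMod p)) :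
    psComp f (X ^ p) = f ^ p := by
  haveI : CharP (PowerSeries (ZMod p)) p :=
    charP_of_injective_ringHom (PowerSeries.C_injective) p
  ext n
  have hXp0 : constantCoeff ((X : PowerSeries (ZMod p)) ^ p) = 0 := by
    rw [map_pow, constantCoeff_X, zero_pow hp.out.ne_zero]
  -- LHS
  have hL : coeff n (psComp f (X ^ p))
      = ∑ k ∈ Finset.range (n + 1), coeff k f * (if n = p * k then 1 else 0) := by
    rw [coeff_psComp]
    apply Finset.sum_congr rfl
    intro k _
    rw [← pow_mul, coeff_X_pow]
  -- RHS
  set S : PowerSeries (ZMod p) :=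
    ∑ i ∈ Finset.range (n + 1), C (coeff i f) * X ^ i with hSdef
  have hcoeffS : ∀ m, m ≤ n → coeff m S = coeff m f := by
    intro m hm
    rw [hSdef, map_sum, Finset.sum_eq_single m]
    · rw [coeff_C_mul, coeff_X_pow, if_pos rfl, mul_one]
    · intro i _ hi
      rw [coeff_C_mul, coeff_X_pow, if_neg (Ne.symm hi), mul_zero]
    · intro h
      exact absurd (Finset.mem_range.mpr (by omega)) h
  have hr : (X : PowerSeries (ZMod p)) ^ (n + 1) ∣ (f - S) := by
    rw [X_pow_dvd_iff]
    intro m hm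
    rw [map_sub, hcoeffS m (by omega), sub_self]
  have hfS : f = S + (f - S) := by ring
  have hfp : coeff n (f ^ p) = coeff n (S ^ p) := by
    conv_lhs => rw [hfS]
    rw [add_pow_char]
    rw [map_add]
    have : coeff n ((f - S) ^ p) = 0 := by
      obtain ⟨v, hv⟩ := hr
      have : (f - S) ^ p = X ^ ((n + 1) * p) * v ^ p := by rw [hv, mul_pow, pow_mul]
      rw [this, coeff_X_pow_mul', if_neg
        (by have := Nat.le_mul_of_pos_right (n + 1) hp.out.pos; omega : ¬((n + 1) * p ≤ n))]
    rw [this, add_zero]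
  have hSp : (S : PowerSeries (ZMod p)) ^ p
      = ∑ i ∈ Finset.range (n + 1), C (coeff i f) * X ^ (i * p) := by
    rw [hSdef, sum_pow_char]
    apply Finset.sum_congr rfl
    intro i _
    rw [mul_pow, ← map_pow, ZMod.pow_card, ← pow_mul]
  rw [hL, hfp, hSp, map_sum]
  apply Finset.sum_congr rfl
  intro i _
  rw [coeff_C_mul, coeff_X_pow, mul_comm i p]

section Padic
variable (p : ℕ) [hp : Fact p.Prime]

lemma coeff_one_E {E : PowerSeries ℤ_[p]} (hE : IsArtinHasse p E) :
    coeff 1 E = 1 := by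
  have h := congrArg (coeff 0) hE.2
  rw [coeff_derivative, coeff_mul] at h
  simp only [Finset.Nat.antidiagonal_zero, Finset.sum_singleton] at h
  have hA : coeff 0 (ahLogDeriv p ℤ_[p]) = 1 := by
    rw [ahLogDeriv, coeff_mk, if_pos ⟨0, by simp⟩]
  rw [hA, mul_one] at h
  have hE0 : coeff 0 E = 1 := by
    rw [coeff_zero_eq_constantCoeff]; exact hE.1
  rw [hE0] at h
  simpa using h

/-- `W = E - 1`. -/
def WofE (E : PowerSeries ℤ_[p]) : PowerSeries ℤ_[p] := E - 1

lemma hW0 {E : PowerSeries ℤ_[p]} (hE : IsArtinHasse p E) :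
    constantCoeff (WofE p E) = 0 := by
  rw [WofE, map_sub, hE.1, map_one, sub_self]

lemma hW1 {E : PowerSeries ℤ_[p]} (hE : IsArtinHasse p E) :
    coeff 1 (WofE p E) = 1 := by
  rw [WofE, map_sub, coeff_one_E p hE, coeff_one, if_neg one_ne_zero, sub_zero]

/-- `H` with `E ∘ H = E ^ p`. -/
def HofE (E : PowerSeries ℤ_[p]) : PowerSeries ℤ_[p] :=
  psComp (compInv (WofE p E)) (E ^ p - 1)

lemma hEp1_0 {E : PowerSeries ℤ_[p]} (hE : IsArtinHasse p E) :
    constantCoeff (E ^ p - 1) = 0 := by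
  rw [map_sub, map_pow, hE.1, one_pow, map_one, sub_self]

lemma hH0 (E : PowerSeries ℤ_[p]) : constantCoeff (HofE p E) = 0 := by
  rw [HofE, constantCoeff_psComp, constantCoeff_compInv]

lemma psComp_E_H {E : PowerSeries ℤ_[p]} (hE : IsArtinHasse p E) :
    psComp E (HofE p E) = E ^ p := by
  have h1 : psComp (WofE p E) (HofE p E) = E ^ p - 1 := by
    rw [HofE, ← psComp_assoc _ _ _ (constantCoeff_compInv _) (hEp1_0 p hE),
      psComp_compInv_right (hW0 p hE) (hW1 p hE), psComp_X (hEp1_0 p hE)]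
  have h2 : psComp E (HofE p E) = psComp (WofE p E) (HofE p E) + 1 := by
    rw [WofE, psComp_sub, psComp_one]
    ring
  rw [h2, h1]
  ring

/-- Uniqueness: a zero-constant-term series is determined by its `E`-composition. -/
lemma psComp_E_inj {E : PowerSeries ℤ_[p]} (hE : IsArtinHasse p E)
    {w : PowerSeries ℤ_[p]} (hw : constantCoeff w = 0) :
    w = psComp (compInv (WofE p E)) (psComp E w - 1) := by
  have h1 : psComp E w - 1 = psComp (WofE p E) w := by
    rw [WofE, psComp_sub, psComp_one]
  rw [h1, ← psComp_assoc _ _ _ (hW0 p hE) hw, psComp_compInv_left (hW0 p hE) (hW1 p hE),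
    psComp_X hw]

lemma pi_rec {E : PowerSeries ℤ_[p]} (hE : IsArtinHasse p E)
    {Pi : ℕ → PowerSeries ℤ_[p]} (hPi : ∀ i, IsPiAH p E i (Pi i)) (i : ℕ) :
    Pi (i + 1) = psComp (HofE p E) (Pi i) := by
  have hcomp : psComp E (psComp (HofE p E) (Pi i)) = (1 + X) ^ p ^ (i + 1) := by
    rw [← psComp_assoc _ _ _ (hH0 p E) (hPi i).1, psComp_E_H p hE,
      psComp_pow _ (hPi i).1, (hPi i).2, ← pow_mul, ← pow_succ]
  have hc0 : constantCoeff (psComp (HofE p E) (Pi i)) = 0 := by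
    rw [constantCoeff_psComp, hH0 p E]
  calc Pi (i + 1) = psComp (compInv (WofE p E)) (psComp E (Pi (i + 1)) - 1) :=
        psComp_E_inj p hE (hPi (i + 1)).1
    _ = psComp (compInv (WofE p E)) (psComp E (psComp (HofE p E) (Pi i)) - 1) := by
        rw [(hPi (i + 1)).2, hcomp]
    _ = psComp (HofE p E) (Pi i) := (psComp_E_inj p hE hc0).symm

/-- `H ≡ X^p (mod p)`. -/
lemma H_mod_p {E : PowerSeries ℤ_[p]} (hE : IsArtinHasse p E) :
    ∀ n : ℕ, (p : ℤ_[p]) ∣ coeff n (HofE p E) - coeff n (X ^ p) := by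
  have hmap : PowerSeries.map (PadicInt.toZMod (p := p)) (HofE p E) = X ^ p := by
    set φ : ℤ_[p] →+* ZMod p := PadicInt.toZMod
    have hW0' : constantCoeff (PowerSeries.map φ (WofE p E)) = 0 := by
      rw [← coeff_zero_eq_constantCoeff, PowerSeries.coeff_map,
        coeff_zero_eq_constantCoeff, hW0 p hE, map_zero]
    have hXp0 : constantCoeff ((X : PowerSeries (ZMod p)) ^ p) = 0 := by
      rw [map_pow, constantCoeff_X, zero_pow hp.out.ne_zero]
    have hfrob : PowerSeries.map φ (E ^ p - 1)
        = psComp (PowerSeries.map φ (WofE p E)) (X ^ p) := by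
      rw [map_sub, map_pow, map_one, ← psComp_X_pow_p p (PowerSeries.map φ E), WofE,
        map_sub, map_one, psComp_sub, psComp_one]
    rw [HofE, map_psComp, hfrob,
      ← psComp_assoc _ _ _ hW0' hXp0, ← map_psComp,
      psComp_compInv_left (hW0 p hE) (hW1 p hE), PowerSeries.map_X, psComp_X hXp0]
  intro n
  have h := congrArg (coeff n) hmap
  rw [PowerSeries.coeff_map] at h
  have h2 : (PadicInt.toZMod (p := p)) (coeff n (HofE p E) - coeff n (X ^ p)) = 0 := by
    rw [map_sub, h]
    have h3 : coeff n ((X : PowerSeries (ZMod p)) ^ p)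
        = (PadicInt.toZMod (p := p)) (coeff n (X ^ p)) := by
      rw [coeff_X_pow, coeff_X_pow]
      split_ifs <;> simp
    rw [h3, sub_self]
  have hker : coeff n (HofE p E) - coeff n (X ^ p)
      ∈ RingHom.ker (PadicInt.toZMod (p := p)) := h2
  rw [PadicInt.ker_toZMod, PadicInt.maximalIdeal_eq_span_p, Ideal.mem_span_singleton] at hker
  exact hker

/-- `G` with `H = X^p + p·G`, `G(0)=0`. -/
def GofE {E : PowerSeries ℤ_[p]} (hE : IsArtinHasse p E) : PowerSeries ℤ_[p] :=
  PowerSeries.mk fun n => (H_mod_p p hE n).choose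

lemma H_eq {E : PowerSeries ℤ_[p]} (hE : IsArtinHasse p E) :
    HofE p E = X ^ p + C (p : ℤ_[p]) * GofE p hE := by
  ext n
  rw [map_add, coeff_C_mul, GofE, coeff_mk]
  have := (H_mod_p p hE n).choose_spec
  rw [← this]
  ring

lemma hG0 {E : PowerSeries ℤ_[p]} (hE : IsArtinHasse p E) :
    constantCoeff (GofE p hE) = 0 := by
  have hXp0 : coeff 0 ((X : PowerSeries ℤ_[p]) ^ p) = 0 := by
    rw [coeff_X_pow, if_neg (Ne.symm hp.out.ne_zero)]
  have h := congrArg (coeff 0) (H_eq p hE)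
  rw [map_add, coeff_C_mul, hXp0, zero_add] at h
  have hH0' : coeff 0 (HofE p E) = 0 := by
    rw [coeff_zero_eq_constantCoeff]; exact hH0 p E
  rw [hH0'] at h
  have hpne : (p : ℤ_[p]) ≠ 0 := Nat.cast_ne_zero.mpr hp.out.ne_zero
  have h4 := (mul_eq_zero.mp h.symm).resolve_left hpne
  rw [coeff_zero_eq_constantCoeff] at h4
  exact h4

lemma pi_rec' {E : PowerSeries ℤ_[p]} (hE : IsArtinHasse p E)
    {Pi : ℕ → PowerSeries ℤ_[p]} (hPi : ∀ i, IsPiAH p E i (Pi i)) (i : ℕ) :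
    Pi (i + 1) = (Pi i) ^ p + C (p : ℤ_[p]) * psComp (GofE p hE) (Pi i) := by
  rw [pi_rec p hE hPi i, H_eq p hE, psComp_add, psComp_mul _ _ (hPi i).1, psComp_C,
    psComp_pow _ (hPi i).1, psComp_X (hPi i).1]

end Padic
section Val
variable (p : ℕ) [hp : Fact p.Prime]

/-- `ord_R(f) ≥ r` for the Gauss valuation with `v(T)=1`, `v(p)=e`. -/
def Vge (e : ℚ) (f : PowerSeries ℤ_[p]) (r : ℚ) : Prop :=
  ∀ j n : ℕ, ¬ ((p : ℤ_[p]) ^ (n + 1) ∣ coeff j f) → r ≤ (n : ℚ) * e + (j : ℚ)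

variable {p}

lemma dvd_split {x y : ℤ_[p]} {n : ℕ}
    (h : ¬ ((p : ℤ_[p]) ^ (n + 1) ∣ x * y)) :
    ∃ n1 n2, n1 + n2 = n ∧ ¬((p : ℤ_[p]) ^ (n1 + 1) ∣ x) ∧ ¬((p : ℤ_[p]) ^ (n2 + 1) ∣ y) := by
  set P : ℕ → Prop := fun k => (p : ℤ_[p]) ^ k ∣ x with hPdef
  have hP0 : P 0 := by simp [hPdef]
  have hdx : (p : ℤ_[p]) ^ (Nat.findGreatest P n) ∣ x :=
    Nat.findGreatest_spec (Nat.zero_le n) hP0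
  by_cases hcase : Nat.findGreatest P n = n
  · refine ⟨n, 0, by omega, ?_, ?_⟩
    · intro hx; exact h (hx.mul_right y)
    · intro hy
      rw [pow_one] at hy
      apply h
      have h2 : (p : ℤ_[p]) ^ n * (p : ℤ_[p]) ∣ x * y := mul_dvd_mul (hcase ▸ hdx) hy
      rwa [← pow_succ] at h2
  · have hlt : Nat.findGreatest P n < n := lt_of_le_of_ne (Nat.findGreatest_le n) hcase
    refine ⟨Nat.findGreatest P n, n - Nat.findGreatest P n, by omega, ?_, ?_⟩
    · show ¬ P (Nat.findGreatest P n + 1)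
      exact Nat.findGreatest_is_greatest (Nat.lt_succ_self _) (by omega)
    · intro hy
      apply h
      have h2 : (p : ℤ_[p]) ^ (Nat.findGreatest P n) *
          (p : ℤ_[p]) ^ (n - Nat.findGreatest P n + 1) ∣ x * y := mul_dvd_mul hdx hy
      rw [← pow_add] at h2
      have heq : Nat.findGreatest P n + (n - Nat.findGreatest P n + 1) = n + 1 := by omega
      rwa [heq] at h2

variable {e : ℚ}

lemma Vge_mono {f : PowerSeries ℤ_[p]} {r s : ℚ} (hsr : s ≤ r) (hf : Vge p e f r) :
    Vge p e f s := fun j n h => le_trans hsr (hf j n h)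

lemma Vge_const0 (he : 0 ≤ e) {f : PowerSeries ℤ_[p]} (h0 : constantCoeff f = 0) :
    Vge p e f 1 := by
  intro j n h
  rcases Nat.eq_zero_or_pos j with rfl | hj
  · rw [coeff_zero_eq_constantCoeff, h0] at h
    exact absurd (dvd_zero _) h
  · have h1 : (1 : ℚ) ≤ (j : ℚ) := by exact_mod_cast hj
    have h2 : (0 : ℚ) ≤ (n : ℚ) * e := mul_nonneg (Nat.cast_nonneg n) he
    linarith

lemma Vge_add {f g : PowerSeries ℤ_[p]} {r : ℚ} (hf : Vge p e f r) (hg : Vge p e g r) :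
    Vge p e (f + g) r := by
  intro j n h
  rw [map_add] at h
  rcases Classical.em ((p : ℤ_[p]) ^ (n + 1) ∣ coeff j f) with hfd | hfd
  · exact hg j n (fun hgd => h (dvd_add hfd hgd))
  · exact hf j n hfd

lemma Vge_mul {f g : PowerSeries ℤ_[p]} {r s : ℚ} (hf : Vge p e f r) (hg : Vge p e g s) :
    Vge p e (f * g) (r + s) := by
  intro j n h
  rw [coeff_mul] at h
  have hex : ∃ q ∈ Finset.HasAntidiagonal.antidiagonal j,
      ¬ ((p : ℤ_[p]) ^ (n + 1) ∣ coeff q.1 f * coeff q.2 g) := by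
    by_contra hall
    push_neg at hall
    exact h (Finset.dvd_sum hall)
  obtain ⟨q, hq, hterm⟩ := hex
  obtain ⟨n1, n2, hsum, h1, h2⟩ := dvd_split hterm
  have e1 := hf q.1 n1 h1
  have e2 := hg q.2 n2 h2
  rw [Finset.HasAntidiagonal.mem_antidiagonal] at hq
  have hj : (q.1 : ℚ) + (q.2 : ℚ) = (j : ℚ) := by exact_mod_cast congrArg Nat.cast hq
  have hn : (n1 : ℚ) + (n2 : ℚ) = (n : ℚ) := by exact_mod_cast congrArg Nat.cast hsum
  have hne : (n1 : ℚ) * e + (n2 : ℚ) * e = (n : ℚ) * e := by rw [← add_mul, hn]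
  linarith [e1, e2]

lemma Vge_pow {f : PowerSeries ℤ_[p]} {r : ℚ} (hf : Vge p e f r) :
    ∀ k : ℕ, 1 ≤ k → Vge p e (f ^ k) ((k : ℚ) * r) := by
  intro k hk
  induction k with
  | zero => omega
  | succ k ih =>
    rcases Nat.eq_zero_or_pos k with rfl | hk'
    · simpa using hf
    · have h1 := Vge_mul (ih hk') hf
      rw [← pow_succ] at h1
      have : ((k : ℚ) * r + r) = ((k + 1 : ℕ) : ℚ) * r := by push_cast; ring
      rwa [this] at h1

lemma Vge_pC {f : PowerSeries ℤ_[p]} {r : ℚ} (hf : Vge p e f r) :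
    Vge p e (C (p : ℤ_[p]) * f) (e + r) := by
  intro j n h
  rw [coeff_C_mul] at h
  rcases Nat.eq_zero_or_pos n with rfl | hn
  · exfalso
    apply h
    rw [pow_one]
    exact Dvd.dvd.mul_right (dvd_refl _) _
  · obtain ⟨n', rfl⟩ : ∃ n', n = n' + 1 := ⟨n - 1, by omega⟩
    have h' : ¬ ((p : ℤ_[p]) ^ (n' + 1) ∣ coeff j f) := by
      intro hd
      apply h
      have := mul_dvd_mul_left (p : ℤ_[p]) hd
      rwa [← pow_succ'] at this
    have := hf j n' h'
    have hcast : ((n' + 1 : ℕ) : ℚ) = (n' : ℚ) + 1 := by push_cast; ring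
    rw [hcast]
    linarith

lemma Vge_psComp (he : 0 ≤ e) {G w : PowerSeries ℤ_[p]} {r : ℚ} (hr : 0 ≤ r)
    (hG0 : constantCoeff G = 0) (hw : Vge p e w r) :
    Vge p e (psComp G w) r := by
  intro j n h
  rw [coeff_psComp] at h
  have hex : ∃ k ∈ Finset.range (j + 1),
      ¬ ((p : ℤ_[p]) ^ (n + 1) ∣ coeff k G * coeff j (w ^ k)) := by
    by_contra hall
    push_neg at hall
    exact h (Finset.dvd_sum hall)
  obtain ⟨k, _, hterm⟩ := hex
  have hk1 : 1 ≤ k := by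
    by_contra hk0
    apply hterm
    have : k = 0 := by omega
    subst this
    rw [coeff_zero_eq_constantCoeff, hG0, zero_mul]
    exact dvd_zero _
  have hterm' : ¬ ((p : ℤ_[p]) ^ (n + 1) ∣ coeff j (w ^ k)) := by
    intro hd
    exact hterm (hd.mul_left _)
  have h1 := Vge_pow hw k hk1 j n hterm'
  have h2 : r ≤ (k : ℚ) * r := by
    have : (1 : ℚ) ≤ (k : ℚ) := by exact_mod_cast hk1
    nlinarith
  linarith

end Val
section Main
variable (p : ℕ) [hp : Fact p.Prime]

lemma pi_claim {E : PowerSeries ℤ_[p]} (hE : IsArtinHasse p E)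
    {Pi : ℕ → PowerSeries ℤ_[p]} (hPi : ∀ i, IsPiAH p E i (Pi i))
    (mt : ℕ) (hmt : 2 ≤ mt) :
    ∀ i, Vge p ((p : ℚ) ^ (mt - 2) * ((p : ℚ) - 1)) (Pi i)
      (min ((p : ℚ) ^ i) ((p : ℚ) ^ (mt - 1))) := by
  have hp1 : (1 : ℚ) ≤ (p : ℚ) := by exact_mod_cast hp.out.one_lt.le
  set e : ℚ := (p : ℚ) ^ (mt - 2) * ((p : ℚ) - 1) with hedef
  have he : 0 ≤ e := mul_nonneg (pow_nonneg (by linarith) _) (by linarith)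
  intro i
  induction i with
  | zero =>
    refine Vge_mono ?_ (Vge_const0 he (hPi 0).1)
    simpa using min_le_left ((p : ℚ) ^ 0) ((p : ℚ) ^ (mt - 1))
  | succ i ih =>
    rw [pi_rec' p hE hPi i]
    set r : ℚ := min ((p : ℚ) ^ i) ((p : ℚ) ^ (mt - 1)) with hrdef
    have hr0 : 0 ≤ r := le_min (pow_nonneg (by linarith) _) (pow_nonneg (by linarith) _)
    have h1 : Vge p e ((Pi i) ^ p) ((p : ℚ) * r) := by
      have := Vge_pow ih p hp.out.one_lt.le
      rwa [show ((p : ℕ) : ℚ) = (p : ℚ) from rfl] at this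
    have h2 : Vge p e (C (p : ℤ_[p]) * psComp (GofE p hE) (Pi i)) (e + r) :=
      Vge_pC (Vge_psComp he hr0 (hG0 p hE) ih)
    have hmin : min ((p : ℚ) ^ (i + 1)) ((p : ℚ) ^ (mt - 1)) ≤ min ((p : ℚ) * r) (e + r) := by
      apply le_min
      · rcases le_total ((p : ℚ) ^ i) ((p : ℚ) ^ (mt - 1)) with hc | hc
        · rw [hrdef, min_eq_left hc, ← pow_succ']
          exact min_le_left _ _
        · rw [hrdef, min_eq_right hc]
          calc min ((p : ℚ) ^ (i + 1)) ((p : ℚ) ^ (mt - 1)) ≤ (p : ℚ) ^ (mt - 1) :=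
                min_le_right _ _
            _ ≤ (p : ℚ) * (p : ℚ) ^ (mt - 1) :=
                le_mul_of_one_le_left (pow_nonneg (by linarith) _) hp1
      · by_cases hi : i + 1 ≤ mt - 1
        · have hle : (p : ℚ) ^ i ≤ (p : ℚ) ^ (mt - 1) := pow_le_pow_right₀ hp1 (by omega)
          have hr : r = (p : ℚ) ^ i := min_eq_left hle
          have h3 : (p : ℚ) ^ i * ((p : ℚ) - 1) ≤ (p : ℚ) ^ (mt - 2) * ((p : ℚ) - 1) :=
            mul_le_mul_of_nonneg_right (pow_le_pow_right₀ hp1 (by omega)) (by linarith)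
          calc min ((p : ℚ) ^ (i + 1)) ((p : ℚ) ^ (mt - 1)) ≤ (p : ℚ) ^ (i + 1) :=
                min_le_left _ _
            _ = (p : ℚ) ^ i + (p : ℚ) ^ i * ((p : ℚ) - 1) := by rw [pow_succ]; ring
            _ ≤ (p : ℚ) ^ i + (p : ℚ) ^ (mt - 2) * ((p : ℚ) - 1) := by linarith
            _ = e + r := by rw [hr, hedef]; ring
        · have hge : (p : ℚ) ^ (mt - 1) ≤ (p : ℚ) ^ i := pow_le_pow_right₀ hp1 (by omega)
          have hr : r = (p : ℚ) ^ (mt - 1) := min_eq_right hge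
          calc min ((p : ℚ) ^ (i + 1)) ((p : ℚ) ^ (mt - 1)) ≤ (p : ℚ) ^ (mt - 1) :=
                min_le_right _ _
            _ ≤ e + r := by rw [hr]; linarith
    exact Vge_mono hmin (Vge_add (Vge_mono (min_le_left _ _) h1)
      (Vge_mono (min_le_right _ _) h2))

end Main
end AuxPS

/-- Let `m̃ = 1 + (first index i with d_i = D)`. With `ord_R` as in `ordRge`
(`ord_R = ord_T` if `m̃ = 1`, the `(p^θ,T)`-adic order, `θ = 1/(p^(m̃−2)(p−1))`, if `m̃ ≥ 2`):
`ord_R(π_i) ≥ p^i` for `0 ≤ i ≤ m̃−1` and `ord_R(π_i) ≥ p^(m̃−1)` for `i ≥ m̃−1`. -/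
theorem pi_i_ordR_bounds (p a : ℕ) [Fact p.Prime] (ha : 1 ≤ a)
    (E : PowerSeries ℤ_[p]) (hE : IsArtinHasse p E)
    (Pi : ℕ → PowerSeries ℤ_[p]) (hPi : ∀ i, IsPiAH p E i (Pi i))
    (d : ℕ → ℕ) (hd0 : 0 < d 0)
    (D : ℕ) (hD : IsGreatest (Set.range d) D)
    (mt : ℕ) (hmt1 : 1 ≤ mt) (hmt2 : d (mt - 1) = D) (hmt3 : ∀ i < mt - 1, d i ≠ D) :
    (∀ i ≤ mt - 1, ordRge p mt (Pi i) ((p : ℚ) ^ i)) ∧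
      (∀ i, mt - 1 ≤ i → ordRge p mt (Pi i) ((p : ℚ) ^ (mt - 1))) := by
  have hp : Fact p.Prime := inferInstance
  have hp1 : (1 : ℚ) ≤ (p : ℚ) := by exact_mod_cast hp.out.one_lt.le
  by_cases hmt : mt = 1
  · have hord1 : ∀ i, ordRge p mt (Pi i) 1 := by
      intro i j n hdiv
      rw [if_pos hmt]
      rcases Nat.eq_zero_or_pos j with rfl | hj
      · rw [PowerSeries.coeff_zero_eq_constantCoeff, (hPi i).1] at hdiv
        exact absurd (dvd_zero _) hdiv
      · exact_mod_cast hj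
    constructor
    · intro i hi
      have hi0 : i = 0 := by omega
      subst hi0
      rw [pow_zero]
      exact hord1 0
    · intro i _
      have h0 : mt - 1 = 0 := by omega
      rw [h0, pow_zero]
      exact hord1 i
  · have hmt2' : 2 ≤ mt := by omega
    have hclaim := AuxPS.pi_claim p hE hPi mt hmt2'
    have hbridge : ∀ (f : PowerSeries ℤ_[p]) (r : ℚ),
        AuxPS.Vge p ((p : ℚ) ^ (mt - 2) * ((p : ℚ) - 1)) f r → ordRge p mt f r := by
      intro f r h j n hdiv
      rw [if_neg hmt]
      exact h j n hdiv
    constructor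
    · intro i hi
      apply hbridge
      exact AuxPS.Vge_mono (le_min le_rfl (pow_le_pow_right₀ hp1 hi)) (hclaim i)
    · intro i hi
      apply hbridge
      exact AuxPS.Vge_mono (le_min (pow_le_pow_right₀ hp1 hi) le_rfl) (hclaim i)

end
end

section
/- Let δ = max_{i≥0} d_i/p^i. With ord_R as defined (ord_R = ord_π if m̃ = 1; the (p^θ, π)-adic order with θ = 1/(p^{m̃−2}(p−1)) if m̃ ≥ 2), the coefficients α_u of E_f(x) = Σ_u α_u x^u satisfy ord_R(α_u) ≥ u/δ for all u ≥ 0. -/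
open PowerSeries
open scoped Classical

noncomputable section

namespace EfAux

/-! ### The divisibility form of `ordRge` and its closure properties -/

/-- the weight function appearing in `ordRge`. -/
def Wt (p mt n j : ℕ) : ℚ :=
  if mt = 1 then (j : ℚ) else (n : ℚ) * ((p : ℚ) ^ (mt - 2) * ((p : ℚ) - 1)) + (j : ℚ)

lemma E_nonneg {p : ℕ} (hp : 1 < p) (mt : ℕ) :
    (0:ℚ) ≤ (p : ℚ) ^ (mt - 2) * ((p : ℚ) - 1) := by
  have h1 : (1 : ℚ) ≤ (p : ℚ) := by exact_mod_cast hp.le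
  have h2 : (0:ℚ) ≤ (p:ℚ) - 1 := by linarith
  positivity

lemma Wt_nonneg {p : ℕ} (hp : 1 < p) (mt n j : ℕ) : 0 ≤ Wt p mt n j := by
  unfold Wt
  split_ifs
  · positivity
  · have := E_nonneg hp mt
    positivity

variable {R : Type*} [CommRing R]

/-- divisibility form of `ordRge`. -/
def Dv (p mt : ℕ) (g : PowerSeries R) (r : ℚ) : Prop :=
  ∀ j n : ℕ, Wt p mt n j < r → (p : R) ^ (n + 1) ∣ PowerSeries.coeff j g

lemma Dv_of_nonpos {p mt : ℕ} (hp : 1 < p) {g : PowerSeries R} {r : ℚ} (hr : r ≤ 0) :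
    Dv p mt g r := fun j n h => absurd (lt_of_lt_of_le h hr) (not_lt.2 (Wt_nonneg hp mt n j))

lemma Dv_mono {p mt : ℕ} {g : PowerSeries R} {r r' : ℚ} (h : r' ≤ r) (hg : Dv p mt g r) :
    Dv p mt g r' := fun j n hlt => hg j n (lt_of_lt_of_le hlt h)

lemma Dv_zero (p mt : ℕ) (r : ℚ) : Dv p mt (0 : PowerSeries R) r := by
  intro j n _; simp

lemma Dv_sum {p mt : ℕ} {ι : Type*} (s : Finset ι) (f : ι → PowerSeries R) {r : ℚ}
    (hf : ∀ i ∈ s, Dv p mt (f i) r) : Dv p mt (∑ i ∈ s, f i) r := by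
  intro j n hlt
  rw [map_sum]
  exact Finset.dvd_sum fun i hi => hf i hi j n hlt

lemma Dv_C_mul {p mt : ℕ} {g : PowerSeries R} {r : ℚ} (x : R) (hg : Dv p mt g r) :
    Dv p mt (PowerSeries.C x * g) r := by
  intro j n hlt
  rw [PowerSeries.coeff_C_mul]
  exact Dvd.dvd.mul_left (hg j n hlt) x

lemma Dv_mul {p mt : ℕ} (hp : 1 < p) {g h : PowerSeries R} {r s : ℚ}
    (hg : Dv p mt g r) (hh : Dv p mt h s) : Dv p mt (g * h) (r + s) := by
  intro j n hlt
  rw [PowerSeries.coeff_mul]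
  apply Finset.dvd_sum
  rintro ⟨a, b⟩ hab
  rw [Finset.HasAntidiagonal.mem_antidiagonal] at hab
  simp only
  by_cases hmt : mt = 1
  · -- T-adic case
    simp only [Wt, hmt, if_true] at hlt ⊢
    rcases lt_or_ge (a : ℚ) r with hr | hr
    · exact Dvd.dvd.mul_right (hg a n (by simp [Wt, hmt, hr])) _
    · have hb : (b : ℚ) < s := by
        have : (a : ℚ) + (b : ℚ) = (j : ℚ) := by exact_mod_cast congrArg (Nat.cast (R := ℚ)) hab
        linarith
      exact Dvd.dvd.mul_left (hh b n (by simp [Wt, hmt, hb])) _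
  · set E : ℚ := (p : ℚ) ^ (mt - 2) * ((p : ℚ) - 1) with hE
    have hE0 : 0 ≤ E := E_nonneg hp mt
    have habQ : (a : ℚ) + (b : ℚ) = (j : ℚ) := by exact_mod_cast congrArg (Nat.cast (R := ℚ)) hab
    simp only [Wt, hmt, if_false] at hlt
    rw [← hE] at hlt
    rcases le_or_gt r (a : ℚ) with hra | hra
    · have : Wt p mt n b < s := by
        simp only [Wt, hmt, if_false, ← hE]
        linarith
      exact Dvd.dvd.mul_left (hh b n this) _
    rcases le_or_gt s (b : ℚ) with hsb | hsb
    · have : Wt p mt n a < r := by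
        simp only [Wt, hmt, if_false, ← hE]
        linarith
      exact Dvd.dvd.mul_right (hg a n this) _
    · -- split the budget between the two factors
      set P1 : ℕ → Prop := fun m => (m : ℚ) * E + (a : ℚ) < r with hP1
      set P2 : ℕ → Prop := fun m => (m : ℚ) * E + (b : ℚ) < s with hP2
      set n1 := Nat.findGreatest P1 n with hn1
      set n2 := Nat.findGreatest P2 n with hn2
      have hP10 : P1 0 := by simp [hP1, hra]
      have hP20 : P2 0 := by simp [hP2, hsb]
      have h1 : P1 n1 := Nat.findGreatest_spec (Nat.zero_le n) hP10
      have h2 : P2 n2 := Nat.findGreatest_spec (Nat.zero_le n) hP20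
      have hg1 : (p : R) ^ (n1 + 1) ∣ PowerSeries.coeff a g := by
        apply hg a n1; simp only [Wt, hmt, if_false, ← hE]; exact h1
      have hh2 : (p : R) ^ (n2 + 1) ∣ PowerSeries.coeff b h := by
        apply hh b n2; simp only [Wt, hmt, if_false, ← hE]; exact h2
      have hsum : n + 1 ≤ (n1 + 1) + (n2 + 1) := by
        by_contra hc
        push_neg at hc
        have hle : n1 + n2 + 2 ≤ n := by omega
        have hb1 : ¬ P1 (n1 + 1) := Nat.findGreatest_is_greatest (Nat.lt_succ_self n1) (by omega)
        have hb2 : ¬ P2 (n2 + 1) := Nat.findGreatest_is_greatest (Nat.lt_succ_self n2) (by omega)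
        simp only [hP1, not_lt] at hb1
        simp only [hP2, not_lt] at hb2
        have hcast : ((n1 + n2 + 2 : ℕ) : ℚ) ≤ (n : ℚ) := Nat.cast_le.mpr hle
        push_cast at hcast
        push_cast at hb1 hb2
        nlinarith [hE0]
      calc (p : R) ^ (n + 1) ∣ (p : R) ^ ((n1 + 1) + (n2 + 1)) := pow_dvd_pow _ hsum
        _ = (p:R)^(n1+1) * (p:R)^(n2+1) := pow_add _ _ _
        _ ∣ _ := mul_dvd_mul hg1 hh2

lemma Dv_pow {p mt : ℕ} (hp : 1 < p) {g : PowerSeries R} {r : ℚ} (hr : 0 ≤ r)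
    (hg : Dv p mt g r) : ∀ k : ℕ, Dv p mt (g ^ k) ((k : ℚ) * r) := by
  intro k
  induction k with
  | zero => simpa using Dv_of_nonpos (g := (1:PowerSeries R)) hp le_rfl
  | succ k ih =>
      have := Dv_mul hp ih hg
      rw [pow_succ]
      refine Dv_mono (le_of_eq ?_) this
      push_cast; ring

/-! ### Valuation of the coefficients of `π_i` -/

/-- valuation exponent for coefficients of `π_i`. -/
def ee (p i j : ℕ) : ℕ := i - min (Nat.log p j) i

lemma ee_anti {p i : ℕ} {j j' : ℕ} (h : j' ≤ j) : ee p i j ≤ ee p i j' := by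
  have := Nat.log_mono_right (b := p) h
  unfold ee; omega

/-- Kummer-type bound: `p^(i - ⌊log_p j⌋) ∣ C(p^i, j)` for `j ≥ 1`. -/
lemma choose_dvd {p : ℕ} (hp : p.Prime) (i j : ℕ) (hj : 1 ≤ j) :
    p ^ ee p i j ∣ Nat.choose (p ^ i) j := by
  rcases lt_or_ge (p ^ i) j with hlt | hle
  · rw [Nat.choose_eq_zero_of_lt hlt]; exact dvd_zero _
  set m := Nat.log p j with hm
  rcases le_or_gt i m with him | hmi
  · have : ee p i j = 0 := by unfold ee; omega
    rw [this]; simpa using one_dvd _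
  have hC : 0 < Nat.choose (p ^ i) j := Nat.choose_pos hle
  have hkey : p ^ i ∣ Nat.choose (p ^ i) j * j := by
    have h1 := Nat.add_one_mul_choose_eq (p ^ i - 1) (j - 1)
    have hpi : 0 < p ^ i := pow_pos hp.pos i
    have h2 : p ^ i - 1 + 1 = p ^ i := Nat.succ_pred_eq_of_pos hpi
    have h3 : j - 1 + 1 = j := Nat.succ_pred_eq_of_pos hj
    rw [h2, h3] at h1
    exact ⟨Nat.choose (p ^ i - 1) (j - 1), h1.symm⟩
  have hj0 : j ≠ 0 := by omega
  have hCj0 : Nat.choose (p ^ i) j * j ≠ 0 := by positivity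
  have hfact : i ≤ (Nat.choose (p ^ i) j * j).factorization p :=
    (Nat.Prime.pow_dvd_iff_le_factorization hp hCj0).mp hkey
  rw [Nat.factorization_mul (by omega) hj0] at hfact
  have hjf : j.factorization p ≤ m := by
    have hd : p ^ (j.factorization p) ∣ j := Nat.ordProj_dvd j p
    have hle2 : p ^ (j.factorization p) ≤ j := Nat.le_of_dvd (by omega) hd
    exact (Nat.le_log_iff_pow_le hp.one_lt hj0).mpr hle2
  have : ee p i j ≤ (Nat.choose (p ^ i) j).factorization p := by
    have := hfact
    simp only [Finsupp.add_apply] at this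
    unfold ee; omega
  exact (Nat.Prime.pow_dvd_iff_le_factorization hp (by omega)).mpr this

/-- coefficient of `(1+X)^n` as a power series. -/
lemma coeff_one_add_X_pow (R : Type*) [CommRing R] (n k : ℕ) :
    PowerSeries.coeff k ((1 + PowerSeries.X) ^ n) = (n.choose k : R) := by
  have h2 : ((1 + PowerSeries.X : PowerSeries R)) ^ n =
      (((1 + Polynomial.X : Polynomial R) ^ n : Polynomial R) : PowerSeries R) := by
    rw [Polynomial.coe_pow, Polynomial.coe_add, Polynomial.coe_one, Polynomial.coe_X]
  rw [h2, Polynomial.coeff_coe, Polynomial.coeff_one_add_X_pow]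

/-- `Good p i M f` : constant term zero and divisibility up to degree `M`. -/
def Good (p i M : ℕ) (f : PowerSeries R) : Prop :=
  constantCoeff f = 0 ∧ ∀ j ≤ M, (p : R) ^ ee p i j ∣ PowerSeries.coeff j f

lemma Good.mono {p i M M' : ℕ} {f : PowerSeries R} (h : M' ≤ M) (hf : Good p i M f) :
    Good p i M' f := ⟨hf.1, fun j hj => hf.2 j (le_trans hj h)⟩

lemma Good.mul {p i M : ℕ} {f g : PowerSeries R} (hf : Good p i M f) (hg : Good p i M g) :
    Good p i (M + 1) (f * g) := by
  constructor
  · rw [map_mul, hf.1, hg.1, mul_zero]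
  intro j hj
  rw [PowerSeries.coeff_mul]
  apply Finset.dvd_sum
  rintro ⟨a, b⟩ hab
  rw [Finset.HasAntidiagonal.mem_antidiagonal] at hab
  simp only
  rcases Nat.eq_zero_or_pos a with ha | ha
  · subst ha
    rw [PowerSeries.coeff_zero_eq_constantCoeff, hf.1, zero_mul]
    exact dvd_zero _
  rcases Nat.eq_zero_or_pos b with hb | hb
  · subst hb
    rw [PowerSeries.coeff_zero_eq_constantCoeff, hg.1, mul_zero]
    exact dvd_zero _
  have haM : a ≤ M := by omega
  have : (p : R) ^ ee p i j ∣ PowerSeries.coeff a f :=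
    dvd_trans (pow_dvd_pow _ (ee_anti (by omega))) (hf.2 a haM)
  exact Dvd.dvd.mul_right this _

lemma Good.pow {p i M : ℕ} {f : PowerSeries R} (hf : Good p i M f) :
    ∀ k : ℕ, 1 ≤ k → Good p i M (f ^ k) := by
  intro k
  induction k with
  | zero => omega
  | succ k ih =>
      intro _
      rcases Nat.eq_zero_or_pos k with hk | hk
      · subst hk; simpa using hf
      · have := (ih hk).mul hf
        rw [_root_.pow_succ]
        exact this.mono (Nat.le_succ M)

lemma Good.pow_succ {p i M : ℕ} {f : PowerSeries R} (hf : Good p i M f) :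
    ∀ k : ℕ, 2 ≤ k → Good p i (M + 1) (f ^ k) := by
  intro k hk
  have h1 : f ^ k = f ^ (k - 1) * f := by
    rw [← _root_.pow_succ]; congr 1; omega
  rw [h1]
  exact (hf.pow (k-1) (by omega)).mul hf

/-- Main p-adic estimate on the coefficients of `π_i`. -/
lemma pi_coeff_dvd {p : ℕ} (hp : p.Prime) (i : ℕ) (E w : PowerSeries R)
    (hE1 : PowerSeries.coeff 1 E = 1)
    (hw0 : constantCoeff w = 0)
    (hcomp : psComp E w = (1 + PowerSeries.X) ^ p ^ i) :
    ∀ j, (p : R) ^ ee p i j ∣ PowerSeries.coeff j w := by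
  intro j
  induction j using Nat.strong_induction_on with
  | _ j IH =>
  rcases Nat.eq_zero_or_pos j with hj | hj
  · subst hj
    rw [PowerSeries.coeff_zero_eq_constantCoeff, hw0]
    exact dvd_zero _
  obtain ⟨m, rfl⟩ : ∃ m, j = m + 1 := ⟨j - 1, by omega⟩
  set j := m + 1 with hjdef
  have heq := congrArg (PowerSeries.coeff j) hcomp
  rw [coeff_one_add_X_pow] at heq
  have hL : PowerSeries.coeff j (psComp E w)
      = ∑ k ∈ Finset.range (j + 1),
          PowerSeries.coeff k E * PowerSeries.coeff j (w ^ k) := by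
    simp [psComp, PowerSeries.coeff_mk]
  rw [hL] at heq
  have hpeel : ∑ k ∈ Finset.range (j + 1),
        PowerSeries.coeff k E * PowerSeries.coeff j (w ^ k)
      = PowerSeries.coeff j w
        + ∑ k ∈ Finset.range m,
            PowerSeries.coeff (k+2) E * PowerSeries.coeff j (w ^ (k+2)) := by
    rw [Finset.sum_range_succ'
      (fun k => PowerSeries.coeff k E * PowerSeries.coeff j (w ^ k)) (m+1)]
    rw [Finset.sum_range_succ'
      (fun k => PowerSeries.coeff (k+1) E * PowerSeries.coeff j (w ^ (k+1))) m]
    have h0 : PowerSeries.coeff j ((w : PowerSeries R) ^ (0:ℕ)) = 0 := by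
      rw [pow_zero, PowerSeries.coeff_one]
      simp [hjdef]
    rw [pow_zero] at h0 ⊢
    rw [h0, mul_zero, add_zero, pow_one, hE1, one_mul]
    ring
  rw [hpeel] at heq
  have hw : PowerSeries.coeff j w = ((p ^ i).choose j : R)
      - ∑ k ∈ Finset.range m,
          PowerSeries.coeff (k+2) E * PowerSeries.coeff j (w ^ (k+2)) := by
    linear_combination heq
  rw [hw]
  apply dvd_sub
  · obtain ⟨t, ht⟩ := choose_dvd hp i j hj
    refine ⟨(t : R), ?_⟩
    rw [ht]; push_cast; ring
  · apply Finset.dvd_sum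
    intro k _
    have hgood : Good p i m w := ⟨hw0, fun j' hj' => IH j' (by omega)⟩
    have := (hgood.pow_succ (k + 2) (by omega)).2 j (by omega)
    exact Dvd.dvd.mul_left this _

/-- arithmetic inequality underlying `ord_R(π_i) ≥ min(p^i, p^(mt-1))`. -/
lemma arith_ineq {p : ℕ} (hp : 2 ≤ p) {i mt s : ℕ} (hmt : 2 ≤ mt)
    (hs : s < min i (mt - 1)) :
    p ^ (min i (mt - 1)) ≤ (i - s) * (p ^ (mt - 2) * (p - 1)) + p ^ s := by
  set k := min i (mt - 1) with hk
  have main : ∀ t : ℕ, 1 ≤ t → t ≤ k → p ^ k ≤ t * (p ^ (k-1) * (p - 1)) + p ^ (k - t) := by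
    intro t
    induction t with
    | zero => omega
    | succ t ih =>
        intro _ hkt
        have hp1 : p - 1 + 1 = p := by omega
        have key : ∀ q : ℕ, q * p = q * (p-1) + q := by
          intro q
          calc q * p = q * ((p-1)+1) := by rw [hp1]
            _ = q * (p-1) + q := by ring
        rcases Nat.eq_zero_or_pos t with ht | ht
        · subst ht
          have h3 : p ^ k = p ^ (k-1) * p := by
            rw [← _root_.pow_succ]; congr 1; omega
          have h4 : k - (0+1) = k - 1 := by omega
          rw [h3, h4, key (p ^ (k-1))]
          omega
        · have h1 := ih ht (by omega)
          have h2 : p ^ (k - t) ≤ p ^ (k-1) * (p-1) + p ^ (k - (t+1)) := by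
            have e1 : p ^ (k - t) = p ^ (k - (t+1)) * p := by
              rw [← _root_.pow_succ]; congr 1; omega
            have e2 : p ^ (k - (t+1)) ≤ p ^ (k - 1) := Nat.pow_le_pow_right (by omega) (by omega)
            rw [e1, key (p ^ (k - (t+1)))]
            have := Nat.mul_le_mul_right (p-1) e2
            omega
          calc p ^ k ≤ t * (p ^ (k-1) * (p - 1)) + p ^ (k - t) := h1
            _ ≤ t * (p ^ (k-1) * (p - 1)) + (p ^ (k-1) * (p-1) + p ^ (k - (t+1))) := by omega
            _ = (t+1) * (p ^ (k-1) * (p - 1)) + p ^ (k - (t+1)) := by ring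
  have hks : k - s ≥ 1 := by omega
  have h := main (k - s) hks (by omega)
  have hcs : k - (k - s) = s := by omega
  rw [hcs] at h
  refine le_trans h ?_
  have h1 : p ^ (k - 1) ≤ p ^ (mt - 2) := Nat.pow_le_pow_right (by omega) (by omega)
  have h2 : k - s ≤ i - s := by omega
  have : (k - s) * (p ^ (k-1) * (p-1)) ≤ (i - s) * (p ^ (mt-2) * (p-1)) :=
    Nat.mul_le_mul h2 (Nat.mul_le_mul_right _ h1)
  omega

/-! ### The `(p,T)`-adic limit argument -/

lemma coeff_mul_dvd (p m : ℕ) (x : PowerSeries R)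
    (hx : ∀ j, (p : R) ^ (m - j) ∣ PowerSeries.coeff j x) (f : PowerSeries R) :
    ∀ j, (p : R) ^ (m - j) ∣ PowerSeries.coeff j (x * f) := by
  intro j
  rw [PowerSeries.coeff_mul]
  apply Finset.dvd_sum
  rintro ⟨a, b⟩ hab
  rw [Finset.HasAntidiagonal.mem_antidiagonal] at hab
  simp only
  exact Dvd.dvd.mul_right (dvd_trans (pow_dvd_pow _ (by omega)) (hx a)) _

lemma coeff_dvd_of_mem_span_pow (p m : ℕ) {g : PowerSeries R}
    (hg : g ∈ (Ideal.span {(p : PowerSeries R), PowerSeries.X}) ^ m) :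
    ∀ j, (p : R) ^ (m - j) ∣ PowerSeries.coeff j g := by
  induction m generalizing g with
  | zero => intro j; simpa using one_dvd _
  | succ m ih =>
    rw [_root_.pow_succ] at hg
    refine Submodule.mul_induction_on hg (fun x hx y hy => ?_)
      (fun x y hx hy j => by rw [map_add]; exact dvd_add (hx j) (hy j))
    obtain ⟨A, B, hAB⟩ := Ideal.mem_span_pair.mp hy
    intro j
    have hsplit : x * y = (x * A) * (p : PowerSeries R) + (x * B) * PowerSeries.X := by
      rw [← hAB]; ring
    rw [hsplit, map_add]
    apply dvd_add
    · rw [← map_natCast (PowerSeries.C (R := R)) p, PowerSeries.coeff_mul_C]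
      obtain ⟨t, ht⟩ := coeff_mul_dvd p m x (ih hx) A j
      rw [ht]
      have he : (p : R) ^ (m - j) * t * (p : R) = (p : R) ^ ((m - j) + 1) * t := by
        rw [_root_.pow_succ]; ring
      rw [he]
      exact Dvd.dvd.mul_right (pow_dvd_pow _ (by omega)) t
    · rcases j with _ | s
      · rw [PowerSeries.coeff_zero_mul_X]; exact dvd_zero _
      · rw [PowerSeries.coeff_succ_mul_X]
        exact dvd_trans (pow_dvd_pow _ (by omega)) (coeff_mul_dvd p m x (ih hx) B s)

/-! ### `Dv` for coefficients of series in `x` -/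

def Dvx (p mt : ℕ) (F : PowerSeries (PowerSeries R)) (r : ℚ) : Prop :=
  ∀ v : ℕ, Dv p mt (PowerSeries.coeff v F) ((v : ℚ) * r)

lemma Dvx_one {p mt : ℕ} (hp : 1 < p) (r : ℚ) :
    Dvx p mt (1 : PowerSeries (PowerSeries R)) r := by
  intro v
  rw [PowerSeries.coeff_one]
  split_ifs with h
  · subst h
    exact Dv_of_nonpos hp (by norm_num)
  · exact Dv_zero p mt _

lemma Dvx_mul {p mt : ℕ} (hp : 1 < p) {F G : PowerSeries (PowerSeries R)} {r : ℚ}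
    (hF : Dvx p mt F r) (hG : Dvx p mt G r) : Dvx p mt (F * G) r := by
  intro v
  rw [PowerSeries.coeff_mul]
  apply Dv_sum
  rintro ⟨a, b⟩ hab
  rw [Finset.HasAntidiagonal.mem_antidiagonal] at hab
  simp only
  refine Dv_mono (le_of_eq ?_) (Dv_mul hp (hF a) (hG b))
  rw [← hab]; push_cast; ring

lemma Dvx_prod {p mt : ℕ} (hp : 1 < p) {ι : Type*} (s : Finset ι)
    (F : ι → PowerSeries (PowerSeries R)) {r : ℚ}
    (hF : ∀ i ∈ s, Dvx p mt (F i) r) : Dvx p mt (∏ i ∈ s, F i) r :=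
  Finset.prod_induction F (fun G => Dvx p mt G r) (fun _ _ ha hb => Dvx_mul hp ha hb)
    (Dvx_one hp r) hF

lemma Dvx_EmonoSub {p mt : ℕ} (hp : 1 < p) {δ : ℚ} (hδ : 0 < δ) (Eb eta : PowerSeries R)
    (cst : R) {u0 di : ℕ} (hu : u0 ≤ di)
    (heta : Dv p mt eta ((di : ℚ) / δ)) :
    Dvx p mt (EmonoSub Eb eta cst u0) (1/δ) := by
  intro v
  unfold EmonoSub
  split_ifs with h0
  · rw [PowerSeries.coeff_C]
    split_ifs with hv
    · subst hv
      exact Dv_of_nonpos hp (by norm_num)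
    · exact Dv_zero p mt _
  · rw [PowerSeries.coeff_mk]
    split_ifs with hdvd
    · set k := v / u0 with hk
      have hdiv : 0 ≤ (di : ℚ) / δ := div_nonneg (Nat.cast_nonneg _) hδ.le
      refine Dv_mono ?_ (Dv_C_mul _ (Dv_pow hp hdiv heta k))
      have hv : (v : ℚ) = (u0 : ℚ) * (k : ℚ) := by
        exact_mod_cast (Nat.mul_div_cancel' hdvd).symm
      have hle : (u0 : ℚ) * (k : ℚ) ≤ (di : ℚ) * (k : ℚ) :=
        mul_le_mul_of_nonneg_right (by exact_mod_cast hu) (Nat.cast_nonneg k)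
      calc (v : ℚ) * (1/δ) = ((u0 : ℚ) * k) / δ := by rw [hv]; ring
        _ ≤ ((di : ℚ) * k) / δ := (div_le_div_iff_of_pos_right hδ).mpr hle
        _ = (k : ℚ) * ((di : ℚ) / δ) := by ring
    · exact Dv_zero p mt _

end EfAux

/-- Let `δ = max_{i≥0} d_i/p^i`. Then the coefficients
`α_u` of `E_f(x) = Σ_u α_u x^u` satisfy `ord_R(α_u) ≥ u/δ` for all `u ≥ 0`. -/
theorem Ef_coefficients_ordR_bound (p a : ℕ) [Fact p.Prime] (ha : 1 ≤ a)
    (Fq : Type) [Field Fq] [Fintype Fq] [CharP Fq p] (hq : Fintype.card Fq = p ^ a)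
    (E : PowerSeries ℤ_[p]) (hE : IsArtinHasse p E)
    (Pi : ℕ → PowerSeries ℤ_[p]) (hPi : ∀ i, IsPiAH p E i (Pi i))
    (d : ℕ → ℕ) (c : ℕ → ℕ → Fq) (hd0 : 0 < d 0)
    (hlead : ∀ i, 0 < d i → c i (d i) ≠ 0) (hctop : ∀ i u, d i < u → c i u = 0)
    (D : ℕ) (hD : IsGreatest (Set.range d) D)
    (mt : ℕ) (hmt1 : 1 ≤ mt) (hmt2 : d (mt - 1) = D) (hmt3 : ∀ i < mt - 1, d i ≠ D)
    (δ : ℚ) (hδ : IsGreatest {x : ℚ | ∃ i : ℕ, x = (d i : ℚ) / (p : ℚ) ^ i} δ)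
    (Ef : PowerSeries (PowerSeries (WittVector p Fq)))
    (hEf : IsEfProd p (PowerSeries.map (toWitt p Fq) E)
      (fun i => PowerSeries.map (toWitt p Fq) (Pi i))
      (fun i u => WittVector.teichmuller p (c i u)) d Ef) :
    ∀ u : ℕ, ordRge p mt (PowerSeries.coeff u Ef) ((u : ℚ) / δ) := by
  intro u
  have hpp : p.Prime := Fact.out
  have hp : 1 < p := hpp.one_lt
  have hpQ : (0:ℚ) < (p:ℚ) := by exact_mod_cast hpp.pos
  -- facts about δ
  have hδub : ∀ i : ℕ, (d i : ℚ) / (p : ℚ) ^ i ≤ δ := fun i => hδ.2 ⟨i, rfl⟩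
  have hδ0 : 0 < δ := by
    have h0 := hδub 0
    rw [pow_zero, div_one] at h0
    have h1 : (1 : ℚ) ≤ (d 0 : ℚ) := by exact_mod_cast hd0
    linarith
  have hdD : ∀ i' : ℕ, (d i' : ℚ) ≤ (D:ℚ) := fun i' => by exact_mod_cast hD.2 ⟨i', rfl⟩
  -- E has constant coefficient 1 and linear coefficient 1
  have hE0 : PowerSeries.constantCoeff E = 1 := hE.1
  have hE1 : PowerSeries.coeff 1 E = 1 := by
    have h1 := congrArg (PowerSeries.coeff 0) hE.2
    rw [PowerSeries.coeff_derivative, PowerSeries.coeff_zero_eq_constantCoeff, map_mul,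
      hE0, one_mul] at h1
    have h2 : PowerSeries.constantCoeff (ahLogDeriv p ℤ_[p]) = 1 := by
      rw [← PowerSeries.coeff_zero_eq_constantCoeff, ahLogDeriv, PowerSeries.coeff_mk,
        if_pos ⟨0, by norm_num⟩]
    rw [h2] at h1
    simpa using h1
  -- p-adic estimate on the coefficients of the mapped π_i
  have hPiDvd : ∀ i j : ℕ, (p : WittVector p Fq) ^ (EfAux.ee p i j) ∣
      PowerSeries.coeff j (PowerSeries.map (toWitt p Fq) (Pi i)) := by
    intro i j
    have h := EfAux.pi_coeff_dvd hpp i E (Pi i) hE1 (hPi i).1 (hPi i).2 j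
    have h2 := map_dvd (toWitt p Fq) h
    rw [map_pow, map_natCast] at h2
    rwa [PowerSeries.coeff_map]
  -- the key Dv property for each mapped π_i
  have hkey : ∀ i : ℕ, EfAux.Dv p mt (PowerSeries.map (toWitt p Fq) (Pi i))
      ((d i : ℚ) / δ) := by
    intro i j n hlt
    rcases Nat.eq_zero_or_pos j with hj | hj
    · subst hj
      have hc0 : PowerSeries.coeff 0 (PowerSeries.map (toWitt p Fq) (Pi i)) = 0 := by
        rw [PowerSeries.coeff_map, PowerSeries.coeff_zero_eq_constantCoeff, (hPi i).1, map_zero]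
      rw [hc0]
      exact dvd_zero _
    by_cases hmt : mt = 1
    · exfalso
      have hD0 : d 0 = D := by rw [← hmt2, hmt]
      have hδD : (D : ℚ) ≤ δ := by
        have h0 := hδub 0
        rw [pow_zero, div_one, hD0] at h0; exact h0
      have hle1 : (d i : ℚ) / δ ≤ 1 := by
        rw [div_le_one hδ0]
        exact le_trans (hdD i) hδD
      rw [EfAux.Wt, if_pos hmt] at hlt
      have h1 : (j : ℚ) < 1 := lt_of_lt_of_le hlt hle1
      have : j < 1 := by exact_mod_cast h1
      omega
    · have hmt2' : 2 ≤ mt := by omega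
      rw [EfAux.Wt, if_neg hmt] at hlt
      set k := min i (mt - 1) with hkdef
      have hbound : (d i : ℚ) / δ ≤ ((p ^ k : ℕ) : ℚ) := by
        rw [div_le_iff₀ hδ0]
        rcases le_total i (mt - 1) with hc | hc
        · have hki : k = i := by omega
          rw [hki]
          have hub := hδub i
          rw [div_le_iff₀ (pow_pos hpQ i)] at hub
          push_cast
          linarith
        · have hkm : k = mt - 1 := by omega
          rw [hkm]
          have h1 := hδub (mt - 1)
          rw [div_le_iff₀ (pow_pos hpQ (mt-1)), hmt2] at h1
          push_cast
          linarith [le_trans (hdD i) h1]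
      have hlt2 : (n : ℚ) * ((p:ℚ)^(mt-2) * ((p:ℚ)-1)) + (j:ℚ) < ((p ^ k : ℕ) : ℚ) :=
        lt_of_lt_of_le hlt hbound
      set s := Nat.log p j with hsdef
      have hpsj : p ^ s ≤ j := Nat.pow_log_le_self p (by omega)
      have hEnn : (0:ℚ) ≤ (n : ℚ) * ((p:ℚ)^(mt-2) * ((p:ℚ)-1)) :=
        mul_nonneg (Nat.cast_nonneg n) (EfAux.E_nonneg hp mt)
      have hsk : s < k := by
        by_contra hsk
        push_neg at hsk
        have h1 : p ^ k ≤ j := le_trans (Nat.pow_le_pow_right (by omega) hsk) hpsj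
        have hcast : ((p^k : ℕ):ℚ) ≤ (j : ℚ) := by exact_mod_cast h1
        linarith
      have hn1 : n + 1 ≤ EfAux.ee p i j := by
        have hee : EfAux.ee p i j = i - s := by
          have : min s i = s := by omega
          rw [EfAux.ee, ← hsdef, this]
        rw [hee]
        push_cast at hlt2
        by_contra hcon
        push_neg at hcon
        have harith := EfAux.arith_ineq hp hmt2' (hkdef ▸ hsk)
        have h1 : (i - s) * (p^(mt-2)*(p-1)) ≤ n * (p^(mt-2)*(p-1)) :=
          Nat.mul_le_mul_right _ (by omega)
        have hnat : p ^ k ≤ n * (p^(mt-2)*(p-1)) + j := by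
          rw [hkdef]
          exact le_trans harith (Nat.add_le_add h1 hpsj)
        have hcast : ((p^k:ℕ):ℚ) ≤ ((n * (p^(mt-2)*(p-1)) + j : ℕ) : ℚ) := by
          exact_mod_cast hnat
        push_cast [Nat.cast_sub hp.le] at hcast
        linarith
      exact dvd_trans (pow_dvd_pow _ hn1) (hPiDvd i j)
  -- Dvx of the partial products
  have hDvxPartial : ∀ N : ℕ, EfAux.Dvx p mt
      (EfPartial (PowerSeries.map (toWitt p Fq) E)
        (fun i => PowerSeries.map (toWitt p Fq) (Pi i))
        (fun i u => WittVector.teichmuller p (c i u)) d N) (1/δ) := by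
    intro N
    unfold EfPartial
    apply EfAux.Dvx_prod hp
    intro i _
    unfold Eh
    apply EfAux.Dvx_prod hp
    intro u0 hu0
    rw [Finset.mem_range] at hu0
    exact EfAux.Dvx_EmonoSub hp hδ0 _ _ _ (by omega : u0 ≤ d i) (hkey i)
  -- final: pass to the limit
  intro j n hnd
  by_contra hc
  have hWt : EfAux.Wt p mt n j < (u : ℚ) / δ := by
    rw [EfAux.Wt]
    by_cases hm : mt = 1
    · rw [if_pos hm]
      rw [if_pos hm] at hc
      exact lt_of_not_ge hc
    · rw [if_neg hm]
      rw [if_neg hm] at hc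
      exact lt_of_not_ge hc
  apply hnd
  have hdiff := hEf (n + j) u
  have hdvd1 := EfAux.coeff_dvd_of_mem_span_pow p (n + j + 1) hdiff j
  have he : (n + j + 1) - j = n + 1 := by omega
  rw [he, map_sub] at hdvd1
  have hdvd2 : (p : WittVector p Fq) ^ (n+1) ∣ PowerSeries.coeff j
      (PowerSeries.coeff u (EfPartial (PowerSeries.map (toWitt p Fq) E)
        (fun i => PowerSeries.map (toWitt p Fq) (Pi i))
        (fun i u => WittVector.teichmuller p (c i u)) d (n + j))) := by
    apply hDvxPartial (n + j) u j n
    rwa [mul_one_div]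
  have hfin := dvd_add hdvd1 hdvd2
  rwa [sub_add_cancel] at hfin

end
end
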